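/- arXiv:1502.01040 — 6 statements merged into one kernel-verified Lean document; each statement's English description precedes it below -/
import Mathlib

section
/- Let k ≥ 2 and n = 2k+1. The kernel of the ℂ-algebra homomorphism ℂ[Z₁, Z₂, Z₃, Z₄, Z₅, Z₆] → S = ℂ[x₁, x₂, x_{2k}, y₀, y₁, …, y_{2k}] determined by Z₁ ↦ x_{2k}² y₀² y₁ y₂ ∏_{j=3}^{2k} y_j², Z₂ ↦ x₁ x₂ y₀^{2k−1} y₁^{k} y₂^{k} ∏_{j=3}^{2k} y_j^{2k+1−j}, Z₃ ↦ x₂² x_{2k} y₀^{2k} y₁^{k} y₂^{k+1} ∏_{j=3}^{2k} y_j^{2k+2−j}, Z₄ ↦ x₁² x_{2k} y₀^{2k} y₁^{k+1} y₂^{k} ∏_{j=3}^{2k} y_j^{2k+2−j}, Z₅ ↦ x₂⁴ y₀^{4k−2} y₁^{2k−1} y₂^{2k+1} ∏_{j=3}^{2k} y_j^{4k+2−2j}, Z₆ ↦ x₁⁴ y₀^{4k−2} y₁^{2k+1} y₂^{2k−1} ∏_{j=3}^{2k} y_j^{4k+2−2j} is the ideal generated by the six polynomials Z₂⁴ − Z₅Z₆,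 Z₁Z₂² − Z₃Z₄, Z₂²Z₄ − Z₃Z₆, Z₂²Z₃ − Z₄Z₅, Z₄² − Z₁Z₆, and Z₃² − Z₁Z₅. -/
/-- Weights of the torus action for the `D_n` singularity: the variables of
`S = ℂ[x₁, x₂, x_{n-1}, y₀, y₁, …, y_{n-1}]` are indexed by `Fin (n+3)` with
`0 ↦ x₁`, `1 ↦ x₂`, `2 ↦ x_{n-1}` and `3+m ↦ y_m`; the coordinate `i : Fin n`
corresponds to the basis vector `e_i` of `ℤⁿ`.  Thus `w(x₁) = e₁`, `w(x₂) = e₂`,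
`w(x_{n-1}) = e_{n-1}`, `w(y₀) = -2e₀+e₁+e₂+e₃`, `w(y₁) = e₀-2e₁`, `w(y₂) = e₀-2e₂`,
`w(y₃) = e₀-2e₃+e₄`, `w(y_m) = e_{m-1}-2e_m+e_{m+1}` for `4 ≤ m ≤ n-2` and
`w(y_{n-1}) = e_{n-2}-2e_{n-1}`. -/
def wD (n : ℕ) (v : Fin (n + 3)) (i : Fin n) : ℤ :=
  if (v : ℕ) = 0 then (if (i : ℕ) = 1 then 1 else 0)
  else if (v : ℕ) = 1 then (if (i : ℕ) = 2 then 1 else 0)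
  else if (v : ℕ) = 2 then (if (i : ℕ) = n - 1 then 1 else 0)
  else if (v : ℕ) = 3 then
    (if (i : ℕ) = 0 then -2 else if (i : ℕ) = 1 ∨ (i : ℕ) = 2 ∨ (i : ℕ) = 3 then 1 else 0)
  else if (v : ℕ) = 4 then (if (i : ℕ) = 0 then 1 else if (i : ℕ) = 1 then -2 else 0)
  else if (v : ℕ) = 5 then (if (i : ℕ) = 0 then 1 else if (i : ℕ) = 2 then -2 else 0)
  else if (v : ℕ) = 6 then
    (if (i : ℕ) = 0 then 1 else 0) + (if (i : ℕ) = 3 then -2 else 0)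
      + (if (i : ℕ) = 4 then 1 else 0)
  else
    (if (i : ℕ) = (v : ℕ) - 4 then 1 else 0) + (if (i : ℕ) = (v : ℕ) - 3 then -2 else 0)
      + (if (i : ℕ) = (v : ℕ) - 2 then 1 else 0)

/-- The variable of index `a` in `S = ℂ[x₁, x₂, x_{n-1}, y₀, y₁, …, y_{n-1}]`
(indices as in `wD`: `0 ↦ x₁`, `1 ↦ x₂`, `2 ↦ x_{n-1}`, `3+m ↦ y_m`). -/
noncomputable def vD (n : ℕ) (a : ℕ) : MvPolynomial (Fin (n + 3)) ℂ :=
  MvPolynomial.X ⟨a % (n + 3), Nat.mod_lt a (by omega)⟩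

/-- The invariant monomial `Z₁ = x_{2k}² y₀² y₁ y₂ ∏_{j=3}^{2k} y_j²`. -/
noncomputable def OZ₁ (k : ℕ) : MvPolynomial (Fin (2 * k + 1 + 3)) ℂ :=
  vD (2 * k + 1) 2 ^ 2 * vD (2 * k + 1) 3 ^ 2 * vD (2 * k + 1) 4 * vD (2 * k + 1) 5 *
    ∏ j ∈ Finset.Icc 3 (2 * k), vD (2 * k + 1) (j + 3) ^ 2

/-- The invariant monomial `Z₂ = x₁ x₂ y₀^{2k-1} y₁^k y₂^k ∏_{j=3}^{2k} y_j^{2k+1-j}`. -/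
noncomputable def OZ₂ (k : ℕ) : MvPolynomial (Fin (2 * k + 1 + 3)) ℂ :=
  vD (2 * k + 1) 0 * vD (2 * k + 1) 1 * vD (2 * k + 1) 3 ^ (2 * k - 1) *
      vD (2 * k + 1) 4 ^ k * vD (2 * k + 1) 5 ^ k *
    ∏ j ∈ Finset.Icc 3 (2 * k), vD (2 * k + 1) (j + 3) ^ (2 * k + 1 - j)

/-- The invariant monomial `Z₃ = x₂² x_{2k} y₀^{2k} y₁^k y₂^{k+1} ∏_{j=3}^{2k} y_j^{2k+2-j}`. -/
noncomputable def OZ₃ (k : ℕ) : MvPolynomial (Fin (2 * k + 1 + 3)) ℂ :=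
  vD (2 * k + 1) 1 ^ 2 * vD (2 * k + 1) 2 * vD (2 * k + 1) 3 ^ (2 * k) *
      vD (2 * k + 1) 4 ^ k * vD (2 * k + 1) 5 ^ (k + 1) *
    ∏ j ∈ Finset.Icc 3 (2 * k), vD (2 * k + 1) (j + 3) ^ (2 * k + 2 - j)

/-- The invariant monomial `Z₄ = x₁² x_{2k} y₀^{2k} y₁^{k+1} y₂^k ∏_{j=3}^{2k} y_j^{2k+2-j}`. -/
noncomputable def OZ₄ (k : ℕ) : MvPolynomial (Fin (2 * k + 1 + 3)) ℂ :=
  vD (2 * k + 1) 0 ^ 2 * vD (2 * k + 1) 2 * vD (2 * k + 1) 3 ^ (2 * k) *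
      vD (2 * k + 1) 4 ^ (k + 1) * vD (2 * k + 1) 5 ^ k *
    ∏ j ∈ Finset.Icc 3 (2 * k), vD (2 * k + 1) (j + 3) ^ (2 * k + 2 - j)

/-- The invariant monomial `Z₅ = x₂⁴ y₀^{4k-2} y₁^{2k-1} y₂^{2k+1} ∏_{j=3}^{2k} y_j^{4k+2-2j}`. -/
noncomputable def OZ₅ (k : ℕ) : MvPolynomial (Fin (2 * k + 1 + 3)) ℂ :=
  vD (2 * k + 1) 1 ^ 4 * vD (2 * k + 1) 3 ^ (4 * k - 2) * vD (2 * k + 1) 4 ^ (2 * k - 1) *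
      vD (2 * k + 1) 5 ^ (2 * k + 1) *
    ∏ j ∈ Finset.Icc 3 (2 * k), vD (2 * k + 1) (j + 3) ^ (4 * k + 2 - 2 * j)

/-- The invariant monomial `Z₆ = x₁⁴ y₀^{4k-2} y₁^{2k+1} y₂^{2k-1} ∏_{j=3}^{2k} y_j^{4k+2-2j}`. -/
noncomputable def OZ₆ (k : ℕ) : MvPolynomial (Fin (2 * k + 1 + 3)) ℂ :=
  vD (2 * k + 1) 0 ^ 4 * vD (2 * k + 1) 3 ^ (4 * k - 2) * vD (2 * k + 1) 4 ^ (2 * k + 1) *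
      vD (2 * k + 1) 5 ^ (2 * k - 1) *
    ∏ j ∈ Finset.Icc 3 (2 * k), vD (2 * k + 1) (j + 3) ^ (4 * k + 2 - 2 * j)

namespace Dev

open MvPolynomial Finset

/-- big monomial with exponent function `a` -/
noncomputable def F (k : ℕ) (a : ℕ → ℕ) : MvPolynomial (Fin (2 * k + 1 + 3)) ℂ :=
  ∏ i ∈ Finset.range (2 * k + 4), vD (2 * k + 1) i ^ a i

def f1 (k i : ℕ) : ℕ := if i = 0 then 0 else if i = 1 then 0 else if i = 2 then 2
  else if i = 3 then 2 else if i = 4 then 1 else if i = 5 then 1 else 2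

def f2 (k i : ℕ) : ℕ := if i = 0 then 1 else if i = 1 then 1 else if i = 2 then 0
  else if i = 3 then 2*k-1 else if i = 4 then k else if i = 5 then k else 2*k+4-i

def f3 (k i : ℕ) : ℕ := if i = 0 then 0 else if i = 1 then 2 else if i = 2 then 1
  else if i = 3 then 2*k else if i = 4 then k else if i = 5 then k+1 else 2*k+5-i

def f4 (k i : ℕ) : ℕ := if i = 0 then 2 else if i = 1 then 0 else if i = 2 then 1
  else if i = 3 then 2*k else if i = 4 then k+1 else if i = 5 then k else 2*k+5-i

def f5 (k i : ℕ) : ℕ := if i = 0 then 0 else if i = 1 then 4 else if i = 2 then 0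
  else if i = 3 then 4*k-2 else if i = 4 then 2*k-1 else if i = 5 then 2*k+1 else 4*k+8-2*i

def f6 (k i : ℕ) : ℕ := if i = 0 then 4 else if i = 1 then 0 else if i = 2 then 0
  else if i = 3 then 4*k-2 else if i = 4 then 2*k+1 else if i = 5 then 2*k-1 else 4*k+8-2*i

theorem Fmul (k : ℕ) (a b : ℕ → ℕ) : F k a * F k b = F k (fun i => a i + b i) := by
  rw [F, F, F, ← Finset.prod_mul_distrib]
  exact Finset.prod_congr rfl fun i _ => (pow_add _ _ _).symm

theorem Fpow (k m : ℕ) (a : ℕ → ℕ) : (F k a) ^ m = F k (fun i => a i * m) := by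
  rw [F, F, ← Finset.prod_pow]
  exact Finset.prod_congr rfl fun i _ => by rw [← pow_mul]

theorem Fcongr (k : ℕ) {a b : ℕ → ℕ} (h : ∀ i, i < 2 * k + 4 → a i = b i) : F k a = F k b :=
  Finset.prod_congr rfl fun i hi => by rw [h i (Finset.mem_range.mp hi)]

theorem F_split (k : ℕ) (hk : 2 ≤ k) (a : ℕ → ℕ) :
    F k a = vD (2*k+1) 0 ^ a 0 * vD (2*k+1) 1 ^ a 1 * vD (2*k+1) 2 ^ a 2 *
      vD (2*k+1) 3 ^ a 3 * vD (2*k+1) 4 ^ a 4 * vD (2*k+1) 5 ^ a 5 *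
      ∏ j ∈ Finset.Icc 3 (2*k), vD (2*k+1) (j+3) ^ a (j+3) := by
  have h1 : F k a = (∏ i ∈ Finset.Ico 0 6, vD (2*k+1) i ^ a i) *
      ∏ i ∈ Finset.Ico 6 (2*k+4), vD (2*k+1) i ^ a i := by
    rw [F, Finset.range_eq_Ico, ← Finset.prod_Ico_consecutive (fun i => vD (2*k+1) i ^ a i) (Nat.zero_le 6) (show 6 ≤ 2*k+4 by omega)]
  rw [h1]
  congr 1
  · rw [show Finset.Ico 0 6 = Finset.range 6 from rfl]
    simp [Finset.prod_range_succ]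
  · rw [show Finset.Icc 3 (2*k) = Finset.Ico 3 (2*k+1) from rfl,
      Finset.prod_Ico_add' (fun i => vD (2*k+1) i ^ a i) 3 (2*k+1) 3]

section OZeq
variable {k : ℕ} (hk : 2 ≤ k)
include hk

theorem OZ1_eq : OZ₁ k = F k (f1 k) := by
  rw [OZ₁, F_split k hk,
    Finset.prod_congr rfl (fun j hj => by
      have := Finset.mem_Icc.mp hj
      rw [show f1 k (j+3) = 2 by unfold f1; split_ifs <;> first | omega | exact ‹False›.elim] :
      ∀ j ∈ Finset.Icc 3 (2*k), vD (2*k+1) (j+3) ^ f1 k (j+3) = vD (2*k+1) (j+3) ^ 2)]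
  norm_num [f1]

theorem OZ2_eq : OZ₂ k = F k (f2 k) := by
  rw [OZ₂, F_split k hk,
    Finset.prod_congr rfl (fun j hj => by
      have := Finset.mem_Icc.mp hj
      rw [show f2 k (j+3) = 2*k+1-j by unfold f2; split_ifs <;> first | omega | exact ‹False›.elim] :
      ∀ j ∈ Finset.Icc 3 (2*k), vD (2*k+1) (j+3) ^ f2 k (j+3) = vD (2*k+1) (j+3) ^ (2*k+1-j))]
  norm_num [f2]

theorem OZ3_eq : OZ₃ k = F k (f3 k) := by
  rw [OZ₃, F_split k hk,
    Finset.prod_congr rfl (fun j hj => by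
      have := Finset.mem_Icc.mp hj
      rw [show f3 k (j+3) = 2*k+2-j by unfold f3; split_ifs <;> first | omega | exact ‹False›.elim] :
      ∀ j ∈ Finset.Icc 3 (2*k), vD (2*k+1) (j+3) ^ f3 k (j+3) = vD (2*k+1) (j+3) ^ (2*k+2-j))]
  norm_num [f3]

theorem OZ4_eq : OZ₄ k = F k (f4 k) := by
  rw [OZ₄, F_split k hk,
    Finset.prod_congr rfl (fun j hj => by
      have := Finset.mem_Icc.mp hj
      rw [show f4 k (j+3) = 2*k+2-j by unfold f4; split_ifs <;> first | omega | exact ‹False›.elim] :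
      ∀ j ∈ Finset.Icc 3 (2*k), vD (2*k+1) (j+3) ^ f4 k (j+3) = vD (2*k+1) (j+3) ^ (2*k+2-j))]
  norm_num [f4]

theorem OZ5_eq : OZ₅ k = F k (f5 k) := by
  rw [OZ₅, F_split k hk,
    Finset.prod_congr rfl (fun j hj => by
      have := Finset.mem_Icc.mp hj
      rw [show f5 k (j+3) = 4*k+2-2*j by unfold f5; split_ifs <;> first | omega | exact ‹False›.elim] :
      ∀ j ∈ Finset.Icc 3 (2*k), vD (2*k+1) (j+3) ^ f5 k (j+3) = vD (2*k+1) (j+3) ^ (4*k+2-2*j))]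
  norm_num [f5]

theorem OZ6_eq : OZ₆ k = F k (f6 k) := by
  rw [OZ₆, F_split k hk,
    Finset.prod_congr rfl (fun j hj => by
      have := Finset.mem_Icc.mp hj
      rw [show f6 k (j+3) = 4*k+2-2*j by unfold f6; split_ifs <;> first | omega | exact ‹False›.elim] :
      ∀ j ∈ Finset.Icc 3 (2*k), vD (2*k+1) (j+3) ^ f6 k (j+3) = vD (2*k+1) (j+3) ^ (4*k+2-2*j))]
  norm_num [f6]

end OZeq

noncomputable def phi (k : ℕ) :
    MvPolynomial (Fin 6) ℂ →ₐ[ℂ] MvPolynomial (Fin (2 * k + 1 + 3)) ℂ :=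
  aeval ![OZ₁ k, OZ₂ k, OZ₃ k, OZ₄ k, OZ₅ k, OZ₆ k]


theorem phi_X0 (k : ℕ) : phi k (X 0) = OZ₁ k := by rw [phi, aeval_X]; rfl
theorem phi_X1 (k : ℕ) : phi k (X 1) = OZ₂ k := by rw [phi, aeval_X]; rfl
theorem phi_X2 (k : ℕ) : phi k (X 2) = OZ₃ k := by rw [phi, aeval_X]; rfl
theorem phi_X3 (k : ℕ) : phi k (X 3) = OZ₄ k := by rw [phi, aeval_X]; rfl
theorem phi_X4 (k : ℕ) : phi k (X 4) = OZ₅ k := by rw [phi, aeval_X]; rfl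
theorem phi_X5 (k : ℕ) : phi k (X 5) = OZ₆ k := by rw [phi, aeval_X]; rfl

theorem mono_eq (u : Fin 6 →₀ ℕ) : (monomial u (1:ℂ) : MvPolynomial (Fin 6) ℂ) =
    X 0 ^ u 0 * X 1 ^ u 1 * X 2 ^ u 2 * X 3 ^ u 3 * X 4 ^ u 4 * X 5 ^ u 5 := by
  rw [monomial_eq, C_1, one_mul, Finsupp.prod_fintype _ _ (fun i => pow_zero _),
    Fin.prod_univ_six]

def G (k : ℕ) (u : Fin 6 →₀ ℕ) (i : ℕ) : ℕ :=
  u 0 * f1 k i + u 1 * f2 k i + u 2 * f3 k i + u 3 * f4 k i + u 4 * f5 k i + u 5 * f6 k i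

set_option maxHeartbeats 1000000 in
theorem phi_mono {k : ℕ} (hk : 2 ≤ k) (u : Fin 6 →₀ ℕ) :
    phi k (monomial u 1) = F k (G k u) := by
  rw [mono_eq]
  simp only [map_mul, map_pow, phi_X0, phi_X1, phi_X2, phi_X3, phi_X4, phi_X5,
    OZ1_eq hk, OZ2_eq hk, OZ3_eq hk, OZ4_eq hk, OZ5_eq hk, OZ6_eq hk, Fpow, Fmul]
  exact Fcongr k fun i _ => by simp only [G]; ring

noncomputable def ps (k ι : ℕ) :
    MvPolynomial (Fin (2 * k + 1 + 3)) ℂ →ₐ[ℂ] Polynomial ℂ :=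
  aeval (fun v : Fin (2 * k + 1 + 3) => if (v : ℕ) = ι then Polynomial.X else 1)

theorem ps_F {k ι : ℕ} (hι : ι < 2 * k + 4) (a : ℕ → ℕ) :
    ps k ι (F k a) = Polynomial.X ^ a ι := by
  rw [F, map_prod]
  have h : ∀ i ∈ Finset.range (2*k+4),
      ps k ι (vD (2*k+1) i ^ a i) = (if i = ι then Polynomial.X ^ a i else 1) := by
    intro i hi
    have hi' := Finset.mem_range.mp hi
    rw [map_pow, vD, ps, aeval_X]
    have hmod : i % (2*k+1+3) = i := Nat.mod_eq_of_lt (by omega)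
    simp only [hmod]
    split_ifs with h
    · rfl
    · exact one_pow _
  rw [Finset.prod_congr rfl h, Finset.prod_ite_eq' (Finset.range (2*k+4)) ι
    (fun i => Polynomial.X ^ a i)]
  simp [Finset.mem_range.mpr hι]

theorem F_ismon (k : ℕ) (a : ℕ → ℕ) : ∃ E, F k a = monomial E 1 := by
  refine Finset.prod_induction _ (fun f => ∃ E, f = monomial E 1)
    (fun f g ⟨E, hf⟩ ⟨E', hg⟩ => ⟨E + E', by rw [hf, hg, monomial_mul, one_mul]⟩)
    ⟨0, by simp⟩ (fun i _ => ⟨Finsupp.single _ (a i), by rw [vD, X_pow_eq_monomial]⟩)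

/-- the span ideal -/
noncomputable def Isp : Ideal (MvPolynomial (Fin 6) ℂ) :=
  Ideal.span
    {X 1 ^ 4 - X 4 * X 5, X 0 * X 1 ^ 2 - X 2 * X 3, X 1 ^ 2 * X 3 - X 2 * X 5,
      X 1 ^ 2 * X 2 - X 3 * X 4, X 3 ^ 2 - X 0 * X 5, X 2 ^ 2 - X 0 * X 4}

set_option maxHeartbeats 1000000 in
theorem span_le_ker {k : ℕ} (hk : 2 ≤ k) : Isp ≤ RingHom.ker (phi k) := by
  rw [Isp, Ideal.span_le]
  have hX : ∀ g ∈ ({X 1 ^ 4 - X 4 * X 5, X 0 * X 1 ^ 2 - X 2 * X 3, X 1 ^ 2 * X 3 - X 2 * X 5,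
      X 1 ^ 2 * X 2 - X 3 * X 4, X 3 ^ 2 - X 0 * X 5, X 2 ^ 2 - X 0 * X 4} :
      Set (MvPolynomial (Fin 6) ℂ)), phi k g = 0 := by
    intro g hg
    simp only [Set.mem_insert_iff, Set.mem_singleton_iff] at hg
    rcases hg with rfl | rfl | rfl | rfl | rfl | rfl <;>
    · simp only [map_sub, map_mul, map_pow, phi_X0, phi_X1, phi_X2, phi_X3, phi_X4, phi_X5,
        OZ1_eq hk, OZ2_eq hk, OZ3_eq hk, OZ4_eq hk, OZ5_eq hk, OZ6_eq hk, Fpow, Fmul]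
      rw [sub_eq_zero]
      refine Fcongr k fun i hi => ?_
      simp only [f1, f2, f3, f4, f5, f6]
      split_ifs <;> first | omega | exact ‹False›.elim
  intro g hg
  exact RingHom.mem_ker.mpr (hX g hg)

noncomputable def MM (a0 a1 a2 a3 a4 a5 : ℕ) : MvPolynomial (Fin 6) ℂ :=
  X 0 ^ a0 * X 1 ^ a1 * X 2 ^ a2 * X 3 ^ a3 * X 4 ^ a4 * X 5 ^ a5

theorem memIsp0 : (X 1 ^ 4 - X 4 * X 5 : MvPolynomial (Fin 6) ℂ) ∈ Isp :=
  Ideal.subset_span (Set.mem_insert _ _)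
theorem memIsp1 : (X 0 * X 1 ^ 2 - X 2 * X 3 : MvPolynomial (Fin 6) ℂ) ∈ Isp :=
  Ideal.subset_span (Set.mem_insert_of_mem _ (Set.mem_insert _ _))
theorem memIsp2 : (X 1 ^ 2 * X 3 - X 2 * X 5 : MvPolynomial (Fin 6) ℂ) ∈ Isp :=
  Ideal.subset_span (Set.mem_insert_of_mem _ (Set.mem_insert_of_mem _ (Set.mem_insert _ _)))
theorem memIsp3 : (X 1 ^ 2 * X 2 - X 3 * X 4 : MvPolynomial (Fin 6) ℂ) ∈ Isp :=
  Ideal.subset_span (Set.mem_insert_of_mem _ (Set.mem_insert_of_mem _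
    (Set.mem_insert_of_mem _ (Set.mem_insert _ _))))
theorem memIsp4 : (X 3 ^ 2 - X 0 * X 5 : MvPolynomial (Fin 6) ℂ) ∈ Isp :=
  Ideal.subset_span (Set.mem_insert_of_mem _ (Set.mem_insert_of_mem _
    (Set.mem_insert_of_mem _ (Set.mem_insert_of_mem _ (Set.mem_insert _ _)))))
theorem memIsp5 : (X 2 ^ 2 - X 0 * X 4 : MvPolynomial (Fin 6) ℂ) ∈ Isp :=
  Ideal.subset_span (Set.mem_insert_of_mem _ (Set.mem_insert_of_mem _
    (Set.mem_insert_of_mem _ (Set.mem_insert_of_mem _ (Set.mem_insert_of_mem _ rfl)))))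

theorem memIsp_symm {f g : MvPolynomial (Fin 6) ℂ} (h : f - g ∈ Isp) : g - f ∈ Isp := by
  simpa [neg_sub] using Isp.neg_mem h

theorem Rstep {g p q r s : MvPolynomial (Fin 6) ℂ} (hg : g ∈ Isp) (hpq : p - q = g * r)
    (hqs : q - s ∈ Isp) : p - s ∈ Isp := by
  have h : p - s = g * r + (q - s) := by rw [← hpq]; ring
  rw [h]
  exact Ideal.add_mem _ (Ideal.mul_mem_right _ _ hg) hqs

theorem keyred : ∀ N a0 a1 a2 a3 a4 a5 : ℕ, 4 * (a2 + a3) + a1 ≤ N →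
    ∃ b0 b1 b2 b3 b4 b5 : ℕ, b2 + b3 ≤ 1 ∧ b1 + 2 * (b2 + b3) ≤ 3 ∧
      MM a0 a1 a2 a3 a4 a5 - MM b0 b1 b2 b3 b4 b5 ∈ Isp := by
  intro N
  induction N with
  | zero =>
    intro a0 a1 a2 a3 a4 a5 h
    exact ⟨a0, a1, a2, a3, a4, a5, by omega, by omega, by rw [sub_self]; exact Isp.zero_mem⟩
  | succ N ih =>
    intro a0 a1 a2 a3 a4 a5 h
    by_cases hc1 : 2 ≤ a2
    · obtain ⟨m, rfl⟩ : ∃ m, a2 = m + 2 := ⟨a2 - 2, by omega⟩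
      obtain ⟨b0, b1, b2, b3, b4, b5, hb1, hb2, hb⟩ := ih (a0+1) a1 m a3 (a4+1) a5 (by omega)
      exact ⟨b0, b1, b2, b3, b4, b5, hb1, hb2,
        Rstep memIsp5 (show MM a0 a1 (m+2) a3 a4 a5 - MM (a0+1) a1 m a3 (a4+1) a5
          = (X 2 ^ 2 - X 0 * X 4) * MM a0 a1 m a3 a4 a5 by simp only [MM]; ring) hb⟩
    by_cases hc2 : 2 ≤ a3
    · obtain ⟨m, rfl⟩ : ∃ m, a3 = m + 2 := ⟨a3 - 2, by omega⟩
      obtain ⟨b0, b1, b2, b3, b4, b5, hb1, hb2, hb⟩ := ih (a0+1) a1 a2 m a4 (a5+1) (by omega)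
      exact ⟨b0, b1, b2, b3, b4, b5, hb1, hb2,
        Rstep memIsp4 (show MM a0 a1 a2 (m+2) a4 a5 - MM (a0+1) a1 a2 m a4 (a5+1)
          = (X 3 ^ 2 - X 0 * X 5) * MM a0 a1 a2 m a4 a5 by simp only [MM]; ring) hb⟩
    by_cases hc3 : 1 ≤ a2 ∧ 1 ≤ a3
    · obtain ⟨m, rfl⟩ : ∃ m, a2 = m + 1 := ⟨a2 - 1, by omega⟩
      obtain ⟨l, rfl⟩ : ∃ l, a3 = l + 1 := ⟨a3 - 1, by omega⟩
      obtain ⟨b0, b1, b2, b3, b4, b5, hb1, hb2, hb⟩ := ih (a0+1) (a1+2) m l a4 a5 (by omega)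
      exact ⟨b0, b1, b2, b3, b4, b5, hb1, hb2,
        Rstep (memIsp_symm memIsp1) (show MM a0 a1 (m+1) (l+1) a4 a5 - MM (a0+1) (a1+2) m l a4 a5
          = (X 2 * X 3 - X 0 * X 1 ^ 2) * MM a0 a1 m l a4 a5 by simp only [MM]; ring) hb⟩
    by_cases hc4 : a2 = 0 ∧ a3 = 0 ∧ 4 ≤ a1
    · obtain ⟨rfl, rfl, hm⟩ := hc4
      obtain ⟨m, rfl⟩ : ∃ m, a1 = m + 4 := ⟨a1 - 4, by omega⟩
      obtain ⟨b0, b1, b2, b3, b4, b5, hb1, hb2, hb⟩ := ih a0 m 0 0 (a4+1) (a5+1) (by omega)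
      exact ⟨b0, b1, b2, b3, b4, b5, hb1, hb2,
        Rstep memIsp0 (show MM a0 (m+4) 0 0 a4 a5 - MM a0 m 0 0 (a4+1) (a5+1)
          = (X 1 ^ 4 - X 4 * X 5) * MM a0 m 0 0 a4 a5 by simp only [MM]; ring) hb⟩
    by_cases hc5 : a2 = 1 ∧ a3 = 0 ∧ 2 ≤ a1
    · obtain ⟨rfl, rfl, hm⟩ := hc5
      obtain ⟨m, rfl⟩ : ∃ m, a1 = m + 2 := ⟨a1 - 2, by omega⟩
      obtain ⟨b0, b1, b2, b3, b4, b5, hb1, hb2, hb⟩ := ih a0 m 0 1 (a4+1) a5 (by omega)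
      exact ⟨b0, b1, b2, b3, b4, b5, hb1, hb2,
        Rstep memIsp3 (show MM a0 (m+2) 1 0 a4 a5 - MM a0 m 0 1 (a4+1) a5
          = (X 1 ^ 2 * X 2 - X 3 * X 4) * MM a0 m 0 0 a4 a5 by simp only [MM]; ring) hb⟩
    by_cases hc6 : a2 = 0 ∧ a3 = 1 ∧ 2 ≤ a1
    · obtain ⟨rfl, rfl, hm⟩ := hc6
      obtain ⟨m, rfl⟩ : ∃ m, a1 = m + 2 := ⟨a1 - 2, by omega⟩
      obtain ⟨b0, b1, b2, b3, b4, b5, hb1, hb2, hb⟩ := ih a0 m 1 0 a4 (a5+1) (by omega)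
      exact ⟨b0, b1, b2, b3, b4, b5, hb1, hb2,
        Rstep memIsp2 (show MM a0 (m+2) 0 1 a4 a5 - MM a0 m 1 0 a4 (a5+1)
          = (X 1 ^ 2 * X 3 - X 2 * X 5) * MM a0 m 0 0 a4 a5 by simp only [MM]; ring) hb⟩
    exact ⟨a0, a1, a2, a3, a4, a5, by omega, by omega, by rw [sub_self]; exact Isp.zero_mem⟩

def InN (w : Fin 6 →₀ ℕ) : Prop := w 2 + w 3 ≤ 1 ∧ w 1 + 2 * (w 2 + w 3) ≤ 3

theorem keyfin (u : Fin 6 →₀ ℕ) : ∃ w : Fin 6 →₀ ℕ, InN w ∧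
    (monomial u (1:ℂ) : MvPolynomial (Fin 6) ℂ) - monomial w 1 ∈ Isp := by
  obtain ⟨b0, b1, b2, b3, b4, b5, hb1, hb2, hb⟩ :=
    keyred (4 * (u 2 + u 3) + u 1) (u 0) (u 1) (u 2) (u 3) (u 4) (u 5) le_rfl
  refine ⟨Finsupp.equivFunOnFinite.symm ![b0, b1, b2, b3, b4, b5], ⟨?_, ?_⟩, ?_⟩
  · show (![b0, b1, b2, b3, b4, b5] 2) + (![b0, b1, b2, b3, b4, b5] 3) ≤ 1
    show b2 + b3 ≤ 1
    exact hb1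
  · show (![b0, b1, b2, b3, b4, b5] 1) + 2 * ((![b0, b1, b2, b3, b4, b5] 2) +
      (![b0, b1, b2, b3, b4, b5] 3)) ≤ 3
    show b1 + 2 * (b2 + b3) ≤ 3
    exact hb2
  · have h1 : (monomial u (1:ℂ) : MvPolynomial (Fin 6) ℂ) = MM (u 0) (u 1) (u 2) (u 3) (u 4) (u 5) := by
      rw [mono_eq, MM]
    have h2 : (monomial (Finsupp.equivFunOnFinite.symm ![b0, b1, b2, b3, b4, b5]) (1:ℂ) :
        MvPolynomial (Fin 6) ℂ) = MM b0 b1 b2 b3 b4 b5 := by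
      rw [mono_eq, MM]; rfl
    rw [h1, h2]; exact hb

noncomputable def nf (u : Fin 6 →₀ ℕ) : Fin 6 →₀ ℕ := (keyfin u).choose

theorem nf_inN (u : Fin 6 →₀ ℕ) : InN (nf u) := (keyfin u).choose_spec.1

theorem nf_mem (u : Fin 6 →₀ ℕ) :
    (monomial u (1:ℂ) : MvPolynomial (Fin 6) ℂ) - monomial (nf u) 1 ∈ Isp :=
  (keyfin u).choose_spec.2

theorem phi_eq_of_Isp {k : ℕ} (hk : 2 ≤ k) {f g : MvPolynomial (Fin 6) ℂ}
    (h : f - g ∈ Isp) : phi k f = phi k g := by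
  have h0 : phi k (f - g) = 0 := span_le_ker hk h
  rw [map_sub, sub_eq_zero] at h0
  exact h0

theorem hG0 (k : ℕ) (w : Fin 6 →₀ ℕ) : G k w 0 = w 1 + 2 * w 3 + 4 * w 5 := by
  norm_num [G, f1, f2, f3, f4, f5, f6]; ring
theorem hG1 (k : ℕ) (w : Fin 6 →₀ ℕ) : G k w 1 = w 1 + 2 * w 2 + 4 * w 4 := by
  norm_num [G, f1, f2, f3, f4, f5, f6]; ring
theorem hG2 (k : ℕ) (w : Fin 6 →₀ ℕ) : G k w 2 = 2 * w 0 + w 2 + w 3 := by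
  norm_num [G, f1, f2, f3, f4, f5, f6]; ring

theorem nf_inj {k : ℕ} (hk : 2 ≤ k) {u v : Fin 6 →₀ ℕ}
    (h : phi k (monomial u 1) = phi k (monomial v 1)) : nf u = nf v := by
  have h1 : phi k (monomial (nf u) (1:ℂ)) = phi k (monomial (nf v) 1) := by
    rw [← phi_eq_of_Isp hk (nf_mem u), ← phi_eq_of_Isp hk (nf_mem v)]
    exact h
  rw [phi_mono hk, phi_mono hk] at h1
  have hdeg : ∀ ι : ℕ, ι < 2 * k + 4 → G k (nf u) ι = G k (nf v) ι := by
    intro ι hι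
    have e0 := congrArg (ps k ι) (congrArg (fun f => f) h1)
    rw [ps_F hι, ps_F hι] at e0
    have := congrArg Polynomial.natDegree e0
    simpa [Polynomial.natDegree_X_pow] using this
  have d0 := hdeg 0 (by omega); have d1 := hdeg 1 (by omega); have d2 := hdeg 2 (by omega)
  rw [hG0, hG0] at d0; rw [hG1, hG1] at d1; rw [hG2, hG2] at d2
  obtain ⟨hu1, hu2⟩ := nf_inN u
  obtain ⟨hv1, hv2⟩ := nf_inN v
  have q0 : nf u 0 = nf v 0 := by omega
  have q1 : nf u 1 = nf v 1 := by omega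
  have q2 : nf u 2 = nf v 2 := by omega
  have q3 : nf u 3 = nf v 3 := by omega
  have q4 : nf u 4 = nf v 4 := by omega
  have q5 : nf u 5 = nf v 5 := by omega
  ext i
  fin_cases i <;> assumption

theorem ker_le_span {k : ℕ} (hk : 2 ≤ k) : RingHom.ker (phi k) ≤ Isp := by
  intro p hp
  have hp0 : phi k p = 0 := hp
  have hD : ∀ u : Fin 6 →₀ ℕ, ∃ E, phi k (monomial u (1:ℂ)) = monomial E 1 := fun u => by
    rw [phi_mono hk]; exact F_ismon k _
  choose D hDspec using hD
  have hmonC : ∀ (u : Fin 6 →₀ ℕ) (c : ℂ), (monomial u c : MvPolynomial (Fin 6) ℂ)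
      = C c * monomial u 1 := fun u c => by rw [C_mul_monomial, mul_one]
  have hphiP : phi k p = ∑ u ∈ p.support, monomial (D u) (coeff u p) := by
    conv_lhs => rw [← support_sum_monomial_coeff p]
    rw [map_sum]
    refine Finset.sum_congr rfl fun u _ => ?_
    rw [hmonC u, map_mul, hDspec u, show phi k (C (coeff u p)) = C (coeff u p) from aeval_C _ _,
      C_mul_monomial, mul_one]
  set q := ∑ u ∈ p.support, monomial (nf u) (coeff u p) with hq
  have hpq : p - q ∈ Isp := by
    have hrep : p - q = ∑ u ∈ p.support,
        ((monomial u (coeff u p) : MvPolynomial (Fin 6) ℂ) - monomial (nf u) (coeff u p)) := by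
      rw [Finset.sum_sub_distrib, support_sum_monomial_coeff, hq]
    rw [hrep]
    refine Ideal.sum_mem _ fun u hu => ?_
    rw [hmonC u, hmonC (nf u), ← mul_sub]
    exact Ideal.mul_mem_left _ _ (nf_mem u)
  have hq0 : q = 0 := by
    refine MvPolynomial.ext _ _ fun w => ?_
    rw [coeff_zero, hq, coeff_sum]
    by_cases hw : ∃ u₀ ∈ p.support, nf u₀ = w
    · obtain ⟨u₀, hu₀, hw0⟩ := hw
      have key : ∀ u ∈ p.support, (nf u = w ↔ D u = D u₀) := by
        intro u _
        constructor
        · intro hnfu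
          have : phi k (monomial u (1:ℂ)) = phi k (monomial u₀ 1) := by
            rw [phi_eq_of_Isp hk (nf_mem u), phi_eq_of_Isp hk (nf_mem u₀), hnfu, hw0]
          rw [hDspec u, hDspec u₀] at this
          rcases (monomial_eq_monomial_iff _ _ _ _).mp this with ⟨h1, _⟩ | ⟨h1, _⟩
          · exact h1
          · exact absurd h1 one_ne_zero
        · intro hDu
          have : phi k (monomial u (1:ℂ)) = phi k (monomial u₀ 1) := by
            rw [hDspec u, hDspec u₀, hDu]
          rw [nf_inj hk this, hw0]
      calc (∑ u ∈ p.support, coeff w (monomial (nf u) (coeff u p)))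
          = ∑ u ∈ p.support, if D u = D u₀ then coeff u p else 0 := by
            refine Finset.sum_congr rfl fun u hu => ?_
            rw [coeff_monomial, if_congr (key u hu) rfl rfl]
        _ = coeff (D u₀) (phi k p) := by
            rw [hphiP, coeff_sum]
            exact Finset.sum_congr rfl fun u _ => (coeff_monomial _ _ _).symm
        _ = 0 := by rw [hp0, coeff_zero]
    · push_neg at hw
      refine Finset.sum_eq_zero fun u hu => ?_
      rw [coeff_monomial, if_neg (hw u hu)]
  have hfin := hpq
  rw [hq0, sub_zero] at hfin
  exact hfin

end Dev

open MvPolynomial in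
/-- for `n = 2k+1` (`k ≥ 2`), the kernel of the `ℂ`-algebra map
`ℂ[Z₁,…,Z₆] → S` sending the variables to the six invariant monomials is the ideal
generated by `Z₂⁴ - Z₅Z₆`, `Z₁Z₂² - Z₃Z₄`, `Z₂²Z₄ - Z₃Z₆`, `Z₂²Z₃ - Z₄Z₅`,
`Z₄² - Z₁Z₆` and `Z₃² - Z₁Z₅`. -/
theorem statement9 (k : ℕ) (hk : 2 ≤ k) :
    RingHom.ker
        (MvPolynomial.aeval ![OZ₁ k, OZ₂ k, OZ₃ k, OZ₄ k, OZ₅ k, OZ₆ k] :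
          MvPolynomial (Fin 6) ℂ →ₐ[ℂ] MvPolynomial (Fin (2 * k + 1 + 3)) ℂ)
      = (Ideal.span
          {X 1 ^ 4 - X 4 * X 5, X 0 * X 1 ^ 2 - X 2 * X 3, X 1 ^ 2 * X 3 - X 2 * X 5,
            X 1 ^ 2 * X 2 - X 3 * X 4, X 3 ^ 2 - X 0 * X 5, X 2 ^ 2 - X 0 * X 4} :
          Ideal (MvPolynomial (Fin 6) ℂ)) := by
  exact le_antisymm (Dev.ker_le_span hk) (Dev.span_le_ker hk)
end

section
/- Let n ≥ 4 and let M be the n×n integer matrix with rows and columns indexed by {0, 1, …, n−1} given by M_{ii} = −2 for all i; M_{01} = M_{10} = M_{02} = M_{20} = M_{03} = M_{30} = 1; M_{i,i+1} = M_{i+1,i} = 1 for 3 ≤ i ≤ n−2; and all other entries 0 (the intersection matrix of the D_n exceptional configuration). Order the indices linearly by 1 ≺ 2 ≺ 0 ≺ 3 ≺ 4 ≺ ⋯ ≺ n−1. Then for every d ∈ ℤⁿ the following procedure terminates in finitely many steps: while d has a negative coordinate, let i be the ≺-least index with d_i < 0 and replace d by d − M·e_i (where e_i is the i-th standard basis vector).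 Equivalently, there is no infinite sequence d⁰ = d, d^{m+1} = d^m − M·e_{i_m} in which every d^m has a negative coordinate and i_m is the ≺-least index with (d^m)_{i_m} < 0; the procedure always reaches a vector with all coordinates nonnegative. -/
private lemma sq_sum_le_card (s : Finset ℕ) (f : ℕ → ℤ) :
    (∑ j ∈ s, f j) ^ 2 ≤ (s.card : ℤ) * ∑ j ∈ s, f j ^ 2 := by
  simpa using sq_sum_le_card_mul_sum_sq (s := s) (f := f)

private lemma chain_id (N : ℕ) (hN : 4 ≤ N) (y : ℕ → ℤ) :
    ∑ j ∈ Finset.Ico 3 N, (y j * (2 * y j - y (if j = 3 then 0 else j - 1) - y (j + 1)))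
      = ∑ j ∈ Finset.Ico 3 N, (y j - y (j + 1)) ^ 2
        + y 3 ^ 2 - y 0 * y 3 - y N ^ 2 + y (N - 1) * y N := by
  induction N, hN using Nat.le_induction with
  | base =>
    have : Finset.Ico 3 4 = {3} := rfl
    rw [this, Finset.sum_singleton, Finset.sum_singleton, if_pos rfl]
    norm_num
    ring
  | succ N hN ih =>
    rw [Finset.sum_Ico_succ_top (by omega), Finset.sum_Ico_succ_top (by omega), ih,
      if_neg (by omega), show N + 1 - 1 = N from rfl]
    ring

private def nbA (j : ℕ) : ℕ := if j = 0 then 1 else if j ≤ 3 then 0 else j - 1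
private def nbB (n j : ℕ) : ℕ := if j = 0 then 2 else if j < 3 then n else j + 1
private def nbC (n j : ℕ) : ℕ := if j = 0 then 3 else n

private lemma rowDecomp {n : ℕ} (M : Matrix (Fin n) (Fin n) ℤ)
    (hM : ∀ i j : Fin n, M i j =
      if (i : ℕ) = (j : ℕ) then -2
      else if ((i : ℕ) = 0 ∧ ((j : ℕ) = 1 ∨ (j : ℕ) = 2 ∨ (j : ℕ) = 3)) ∨
          ((j : ℕ) = 0 ∧ ((i : ℕ) = 1 ∨ (i : ℕ) = 2 ∨ (i : ℕ) = 3)) ∨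
          (3 ≤ (i : ℕ) ∧ (j : ℕ) = (i : ℕ) + 1) ∨ (3 ≤ (j : ℕ) ∧ (i : ℕ) = (j : ℕ) + 1)
        then 1 else 0)
    (v : Fin n → ℤ) (j k : Fin n) :
    M j k * v k = (-2) * (if (k : ℕ) = (j : ℕ) then v k else 0)
      + ((if (k : ℕ) = nbA (j : ℕ) then v k else 0)
        + (if (k : ℕ) = nbB n (j : ℕ) then v k else 0)
        + (if (k : ℕ) = nbC n (j : ℕ) then v k else 0)) := by
  have hj := j.isLt
  have hk := k.isLt
  rw [hM]
  simp only [nbA, nbB, nbC]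
  split_ifs <;> first | ring1 | (exfalso; omega)

private lemma Msymm {n : ℕ} (M : Matrix (Fin n) (Fin n) ℤ)
    (hM : ∀ i j : Fin n, M i j =
      if (i : ℕ) = (j : ℕ) then -2
      else if ((i : ℕ) = 0 ∧ ((j : ℕ) = 1 ∨ (j : ℕ) = 2 ∨ (j : ℕ) = 3)) ∨
          ((j : ℕ) = 0 ∧ ((i : ℕ) = 1 ∨ (i : ℕ) = 2 ∨ (i : ℕ) = 3)) ∨
          (3 ≤ (i : ℕ) ∧ (j : ℕ) = (i : ℕ) + 1) ∨ (3 ≤ (j : ℕ) ∧ (i : ℕ) = (j : ℕ) + 1)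
        then 1 else 0)
    (i j : Fin n) : M i j = M j i := by
  rw [hM, hM]
  split_ifs <;> omega

set_option maxHeartbeats 1000000 in
/-- let `M` be the intersection matrix of the `D_n` exceptional
configuration (`M_{ii} = -2`, `M_{ij} = 1` if `E_i` and `E_j` are adjacent in the
dual graph of `D_n`, else `0`) and order the indices by `1 ≺ 2 ≺ 0 ≺ 3 ≺ ⋯ ≺ n-1`
(encoded by the rank function `ord`).  Then there is no infinite sequence
`d⁰ = d, d^{m+1} = d^m - M·e_{i_m}` in which every `d^m` has a negative coordinate
and `i_m` is the `≺`-least index with `(d^m)_{i_m} < 0`; i.e. the procedure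
"subtract the column of `M` at the least negative coordinate" always terminates at a
vector with all coordinates nonnegative. -/
theorem statement12 (n : ℕ) (hn : 4 ≤ n) (M : Matrix (Fin n) (Fin n) ℤ)
    (hM : ∀ i j : Fin n, M i j =
      if (i : ℕ) = (j : ℕ) then -2
      else if ((i : ℕ) = 0 ∧ ((j : ℕ) = 1 ∨ (j : ℕ) = 2 ∨ (j : ℕ) = 3)) ∨
          ((j : ℕ) = 0 ∧ ((i : ℕ) = 1 ∨ (i : ℕ) = 2 ∨ (i : ℕ) = 3)) ∨
          (3 ≤ (i : ℕ) ∧ (j : ℕ) = (i : ℕ) + 1) ∨ (3 ≤ (j : ℕ) ∧ (i : ℕ) = (j : ℕ) + 1)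
        then 1 else 0)
    (ord : ℕ → ℕ)
    (hord : ∀ a, ord a = if a = 1 then 0 else if a = 2 then 1 else if a = 0 then 2 else a) :
    ¬ ∃ (d : ℕ → Fin n → ℤ) (idx : ℕ → Fin n),
        (∀ m, d m (idx m) < 0) ∧
        (∀ m (j : Fin n), d m j < 0 → ord (idx m) ≤ ord j) ∧
        (∀ m, d (m + 1) = fun j => d m j - M j (idx m)) := by
  rintro ⟨d, idx, hneg, -, hstep⟩
  classical
  -- firing counts
  set x : ℕ → Fin n → ℤ := fun m j => ∑ t ∈ Finset.range m, (if idx t = j then (1:ℤ) else 0)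
    with hxdef
  have hx0 : ∀ j, x 0 j = 0 := fun j => by simp [hxdef]
  have hxs : ∀ m j, x (m+1) j = x m j + (if idx m = j then 1 else 0) := by
    intro m j
    simp only [hxdef]
    exact Finset.sum_range_succ _ m
  have hxnn : ∀ m j, 0 ≤ x m j := fun m j =>
    Finset.sum_nonneg fun t _ => by split <;> norm_num
  have hxsum : ∀ m, (∑ j, x m j) = (m : ℤ) := by
    intro m
    induction m with
    | zero => simp [hx0]
    | succ m ih =>
      have h1 : (∑ j, x (m+1) j)
          = (∑ j, x m j) + ∑ j : Fin n, (if idx m = j then (1:ℤ) else 0) := by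
        rw [← Finset.sum_add_distrib]
        exact Finset.sum_congr rfl fun j _ => hxs m j
      rw [h1, ih, Finset.sum_ite_eq]
      simp
  -- d in terms of firing counts
  have hd : ∀ m (j : Fin n), d m j = d 0 j - ∑ k, M j k * x m k := by
    intro m
    induction m with
    | zero => intro j; simp [hx0]
    | succ m ih =>
      intro j
      have h1 : d (m+1) j = d m j - M j (idx m) := by rw [hstep m]
      have h2 : (∑ k, M j k * x (m+1) k) = (∑ k, M j k * x m k) + M j (idx m) := by
        have h3 : ∀ k : Fin n, M j k * x (m+1) k
            = M j k * x m k + (if idx m = k then M j k else 0) := by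
          intro k; rw [hxs]; split <;> ring
        rw [Finset.sum_congr rfl fun k _ => h3 k, Finset.sum_add_distrib, Finset.sum_ite_eq]
        simp
      rw [h1, ih j, h2]
      ring
  -- the quadratic-ish potential g m = ∑ x (d m + d 0) is nonincreasing
  have hrow : ∀ m, (∑ j, x m j * M j (idx m)) = d 0 (idx m) - d m (idx m) := by
    intro m
    have h1 : (∑ j, x m j * M j (idx m)) = ∑ j, M (idx m) j * x m j :=
      Finset.sum_congr rfl fun j _ => by rw [Msymm M hM j (idx m)]; ring
    have h2 := hd m (idx m)
    rw [h1]; linarith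
  have hMdiag : ∀ i : Fin n, M i i = -2 := fun i => by rw [hM]; simp
  have hgrec : ∀ m, (∑ j, x (m+1) j * (d (m+1) j + d 0 j))
      = (∑ j, x m j * (d m j + d 0 j)) + (2 * d m (idx m) + 2) := by
    intro m
    have h1 : ∀ j : Fin n, x (m+1) j * (d (m+1) j + d 0 j)
        = x m j * (d m j + d 0 j) - x m j * M j (idx m)
          + (if idx m = j then d m j - M j (idx m) + d 0 j else 0) := by
      intro j
      have h2 : d (m+1) j = d m j - M j (idx m) := by rw [hstep m]
      rw [h2, hxs]
      split <;> ring
    rw [Finset.sum_congr rfl fun j _ => h1 j, Finset.sum_add_distrib,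
      Finset.sum_sub_distrib, hrow m, Finset.sum_ite_eq]
    simp only [Finset.mem_univ, if_true, hMdiag]
    ring
  have hgle : ∀ m, (∑ j, x m j * (d m j + d 0 j)) ≤ 0 := by
    intro m
    induction m with
    | zero => simp [hx0]
    | succ m ih =>
      have h1 := hgrec m
      have h2 : d m (idx m) ≤ -1 := by have := hneg m; omega
      linarith
  -- bound on the quadratic form S m
  set K : ℤ := ∑ j, |d 0 j| with hKdef
  have hK0 : 0 ≤ K := Finset.sum_nonneg fun j _ => abs_nonneg _
  have hKj : ∀ j : Fin n, -(d 0 j) ≤ K :=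
    fun j => le_trans (neg_le_abs _)
      (Finset.single_le_sum (fun k _ => abs_nonneg (d 0 k)) (Finset.mem_univ j))
  have hS : ∀ m, (∑ j, x m j * (d m j - d 0 j)) ≤ 2 * K * m := by
    intro m
    have h1 : (∑ j, x m j * (d m j - d 0 j))
        = (∑ j, x m j * (d m j + d 0 j)) + ∑ j, x m j * (-2 * d 0 j) := by
      rw [← Finset.sum_add_distrib]
      exact Finset.sum_congr rfl fun j _ => by ring
    have h2 : (∑ j, x m j * (-2 * d 0 j)) ≤ ∑ j : Fin n, x m j * (2 * K) := by
      refine Finset.sum_le_sum fun j _ => ?_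
      exact mul_le_mul_of_nonneg_left (by linarith [hKj j]) (hxnn m j)
    have h3 : (∑ j : Fin n, x m j * (2 * K)) = 2 * K * m := by
      rw [← Finset.sum_mul, hxsum m]; ring
    have h4 := hgle m
    rw [h1]
    rw [h3] at h2
    linarith
  -- key quantitative bound for each m
  have key : ∀ m : ℕ, (m:ℤ) * m ≤ (2 * (2*(n:ℤ)+3) * K * (n:ℤ)^2) * m := by
    intro m
    set y : ℕ → ℤ := fun a => if h : a < n then x m ⟨a, h⟩ else 0 with hydef
    have hyx : ∀ j : Fin n, y (j : ℕ) = x m j := fun j => by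
      simp only [hydef, j.isLt, dif_pos, Fin.eta]
    have hyz : ∀ a, n ≤ a → y a = 0 := fun a ha => by
      simp only [hydef]; rw [dif_neg (by omega)]
    have hyn : y n = 0 := hyz n le_rfl
    -- sums of indicator functions
    have L1 : ∀ a : ℕ, (∑ k : Fin n, if (k:ℕ) = a then x m k else 0) = y a := by
      intro a
      by_cases h : a < n
      · have h1 : ∀ k : Fin n, (if (k:ℕ) = a then x m k else 0)
            = (if k = ⟨a, h⟩ then x m k else 0) := by
          intro k
          simp [Fin.ext_iff]
        rw [Finset.sum_congr rfl fun k _ => h1 k, Finset.sum_ite_eq' Finset.univ ⟨a, h⟩ (x m)]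
        simp only [Finset.mem_univ, if_true]
        simp [hydef, h]
      · rw [hyz a (le_of_not_gt h), Finset.sum_eq_zero]
        intro k _
        exact if_neg (by have := k.isLt; omega)
    -- row evaluation
    have L2 : ∀ j : Fin n, (∑ k, M j k * x m k)
        = (-2) * y (j:ℕ) + (y (nbA (j:ℕ)) + y (nbB n (j:ℕ)) + y (nbC n (j:ℕ))) := by
      intro j
      rw [Finset.sum_congr rfl fun k _ => rowDecomp M hM (x m) j k,
        Finset.sum_add_distrib, Finset.sum_add_distrib, Finset.sum_add_distrib,
        ← Finset.mul_sum, L1, L1, L1, L1]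
    set F : ℕ → ℤ := fun a => y a * (2*y a - y (nbA a) - y (nbB n a) - y (nbC n a)) with hFdef
    have hSOS1 : (∑ j, x m j * (d m j - d 0 j)) = ∑ a ∈ Finset.range n, F a := by
      rw [← Fin.sum_univ_eq_sum_range]
      refine Finset.sum_congr rfl fun j _ => ?_
      have h1 : d m j - d 0 j = -(∑ k, M j k * x m k) := by
        have := hd m j; linarith
      rw [h1, L2 j, ← hyx j]
      simp only [hFdef]
      ring
    have hsplit : (∑ a ∈ Finset.range n, F a)
        = (F 0 + F 1 + F 2) + ∑ a ∈ Finset.Ico 3 n, F a := by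
      rw [Finset.range_eq_Ico,
        ← Finset.sum_Ico_consecutive F (by omega : 0 ≤ 3) (by omega : 3 ≤ n)]
      congr 1
      rw [← Finset.range_eq_Ico, Finset.sum_range_succ, Finset.sum_range_succ,
        Finset.sum_range_one]
    have hF0 : F 0 = y 0 * (2*y 0 - y 1 - y 2 - y 3) := by
      simp only [hFdef, nbA, nbB, nbC]
      norm_num
    have hF1 : F 1 = y 1 * (2*y 1 - y 0) := by
      simp only [hFdef, nbA, nbB, nbC]
      norm_num [hyn]
    have hF2 : F 2 = y 2 * (2*y 2 - y 0) := by
      simp only [hFdef, nbA, nbB, nbC]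
      norm_num [hyn]
    have hIco : (∑ a ∈ Finset.Ico 3 n, F a)
        = ∑ a ∈ Finset.Ico 3 n, (y a * (2 * y a - y (if a = 3 then 0 else a - 1) - y (a+1))) := by
      refine Finset.sum_congr rfl fun a ha => ?_
      rw [Finset.mem_Ico] at ha
      have hA : nbA a = if a = 3 then 0 else a - 1 := by
        simp only [nbA]; split_ifs <;> omega
      have hB : nbB n a = a + 1 := by
        simp only [nbB]; rw [if_neg (by omega), if_neg (by omega)]
      have hC : nbC n a = n := by
        simp only [nbC]; rw [if_neg (by omega)]
      simp only [hFdef, hA, hB, hC, hyn]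
      ring
    -- the sum-of-squares form
    set Q : ℤ := ∑ a ∈ Finset.Ico 3 n, (y a - y (a+1))^2 with hQdef
    set S : ℤ := ∑ j, x m j * (d m j - d 0 j) with hSdef
    have hS2 : S = y 0 * (2*y 0 - y 1 - y 2 - y 3) + y 1*(2*y 1 - y 0) + y 2*(2*y 2 - y 0)
        + Q + y 3^2 - y 0 * y 3 := by
      rw [hSOS1, hsplit, hF0, hF1, hF2, hIco, chain_id n hn y, hyn, ← hQdef]
      ring
    have hQnn : 0 ≤ Q := by
      rw [hQdef]; exact Finset.sum_nonneg fun a _ => sq_nonneg _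
    have hSm : S ≤ 2 * K * m := by rw [hSdef]; exact hS m
    clear_value y F Q S
    have hSQ : 2*(S - Q) = (y 0 - 2*y 1)^2 + (y 0 - 2*y 2)^2 + 2*(y 0 - y 3)^2 := by
      linear_combination 2 * hS2
    have hQS : Q ≤ S := by
      nlinarith [sq_nonneg (y 0 - 2*y 1), sq_nonneg (y 0 - 2*y 2), sq_nonneg (y 0 - y 3)]
    have hSnn : 0 ≤ S := le_trans hQnn hQS
    have hy03 : (y 0 - y 3)^2 ≤ S - Q := by
      nlinarith [sq_nonneg (y 0 - 2*y 1), sq_nonneg (y 0 - 2*y 2)]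
    -- telescoping bound along the chain
    have htel : ∀ a, 3 ≤ a → a < n → (∑ b ∈ Finset.Ico a n, (y b - y (b+1))) = y a := by
      intro a h3 han
      rw [Finset.sum_Ico_eq_sub _ (le_of_lt han), Finset.sum_range_sub' y,
        Finset.sum_range_sub' y, hyn]
      ring
    have hb3 : ∀ a, 3 ≤ a → a < n → y a ^ 2 ≤ (n:ℤ) * Q := by
      intro a h3 han
      have h1 := sq_sum_le_card (Finset.Ico a n) (fun b => y b - y (b+1))
      rw [htel a h3 han] at h1
      have hcard : ((Finset.Ico a n).card : ℤ) ≤ (n:ℤ) := by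
        rw [Nat.card_Ico]; exact_mod_cast Nat.sub_le n a
      have hsq : (∑ b ∈ Finset.Ico a n, (y b - y (b+1))^2) ≤ Q := by
        rw [hQdef]
        exact Finset.sum_le_sum_of_subset_of_nonneg
          (Finset.Ico_subset_Ico h3 le_rfl) (fun _ _ _ => sq_nonneg _)
      have hsnn : (0:ℤ) ≤ ∑ b ∈ Finset.Ico a n, (y b - y (b+1))^2 :=
        Finset.sum_nonneg fun b _ => sq_nonneg _
      have h2 : ((Finset.Ico a n).card : ℤ) * (∑ b ∈ Finset.Ico a n, (y b - y (b+1))^2)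
          ≤ (n:ℤ) * Q := mul_le_mul hcard hsq hsnn (by positivity)
      linarith
    have hnn0 : (0:ℤ) ≤ (n:ℤ) := by positivity
    have hb0 : y 0 ^ 2 ≤ (2*(n:ℤ)+2) * S := by
      have h3 := hb3 3 le_rfl (by omega)
      have h4 : (2*(n:ℤ)-2) * Q ≤ (2*(n:ℤ)-2) * S := by
        apply mul_le_mul_of_nonneg_left hQS
        have : (4:ℤ) ≤ (n:ℤ) := by exact_mod_cast hn
        linarith
      nlinarith [sq_nonneg (y 0 - 2*y 3), hy03]
    have hb1 : ∀ b, b = 1 ∨ b = 2 → y b ^ 2 ≤ (2*(n:ℤ)+3) * S := by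
      intro b hb
      have hA : (y 0 - 2*y b)^2 ≤ 2*S := by
        rcases hb with rfl | rfl
        · nlinarith [sq_nonneg (y 0 - 2*y 2), sq_nonneg (y 0 - y 3)]
        · nlinarith [sq_nonneg (y 0 - 2*y 1), sq_nonneg (y 0 - y 3)]
      nlinarith [sq_nonneg (y 0 - y b), hb0, hSnn]
    have hbound : ∀ j : Fin n, (x m j)^2 ≤ (2*(n:ℤ)+3) * S := by
      intro j
      rw [← hyx j]
      by_cases h0 : (j:ℕ) = 0
      · rw [h0]; nlinarith [hb0, hSnn]
      · by_cases h1 : (j:ℕ) = 1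
        · rw [h1]; exact hb1 1 (Or.inl rfl)
        · by_cases h2 : (j:ℕ) = 2
          · rw [h2]; exact hb1 2 (Or.inr rfl)
          · have h3 : 3 ≤ (j:ℕ) := by omega
            have h4 := hb3 (j:ℕ) h3 j.isLt
            nlinarith [hQS, hSnn]
    -- conclude the quantitative bound
    obtain ⟨j0, -, hj0⟩ := Finset.exists_max_image Finset.univ (x m) ⟨⟨0, by omega⟩, Finset.mem_univ _⟩
    have hmX : (m:ℤ) ≤ (n:ℤ) * x m j0 := by
      have h1 : (m:ℤ) = ∑ j, x m j := (hxsum m).symm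
      have h2 : (∑ j, x m j) ≤ ∑ _j : Fin n, x m j0 :=
        Finset.sum_le_sum fun j _ => hj0 j (Finset.mem_univ j)
      have h3 : (∑ _j : Fin n, x m j0) = (n:ℤ) * x m j0 := by
        rw [Finset.sum_const, Finset.card_univ, Fintype.card_fin, nsmul_eq_mul]
      linarith
    have hX2 : (x m j0)^2 ≤ (2*(n:ℤ)+3) * (2 * K * m) := by
      have h1 := hbound j0
      have h2 : (2*(n:ℤ)+3) * S ≤ (2*(n:ℤ)+3) * (2 * K * m) :=
        mul_le_mul_of_nonneg_left hSm (by positivity)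
      linarith
    have hmnn : (0:ℤ) ≤ (m:ℤ) := by positivity
    have hXnn : (0:ℤ) ≤ x m j0 := hxnn m j0
    nlinarith [mul_le_mul hmX hmX hmnn (by positivity : (0:ℤ) ≤ (n:ℤ) * x m j0),
      mul_le_mul_of_nonneg_left hX2 (by positivity : (0:ℤ) ≤ (n:ℤ)^2)]
  -- derive the contradiction
  set B : ℤ := 2 * (2*(n:ℤ)+3) * K * (n:ℤ)^2 with hBdef
  have hB : 0 ≤ B := by
    apply mul_nonneg (mul_nonneg (by positivity) hK0) (by positivity)
  have hfin := key (B.toNat + 1)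
  have hcast : ((B.toNat + 1 : ℕ) : ℤ) = B + 1 := by
    push_cast [Int.toNat_of_nonneg hB]; ring
  rw [hcast] at hfin
  nlinarith [hB]
end

section
/- Let n ≥ 4 and let k ≥ 1 be odd. In the polynomial ring ℂ[x₂, x_{n−1}, y₀, y₁, …, y_{n−1}] with the ℤⁿ-weights inherited from the D_n grading (w(x₂) = e₂, w(x_{n−1}) = e_{n−1}, w(y₀) = −2e₀ + e₁ + e₂ + e₃, w(y₁) = e₀ − 2e₁, w(y₂) = e₀ − 2e₂, w(y₃) = e₀ − 2e₃ + e₄, w(y_m) = e_{m−1} − 2e_m + e_{m+1} for 4 ≤ m ≤ n−2, w(y_{n−1}) = e_{n−2} − 2e_{n−1}), a monomial has weight k·e₁ and is not divisible by y₂x₂² if and only if it equals M_a for some integer a ≥ 0, where M_a = x₂ · x_{n−1}^{n(k−1)/2 + 1 + 2a} · y₀^{k+2a} · y₁^{a} · y₂^{(k+1)/2 + a} · ∏_{j=3}^{n−1} y_j^{j(k−1)/2 + 1 + 2a}. -/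
/-- Weights of the `ℤⁿ`-grading on `ℂ[x₂, x_{n-1}, y₀, y₁, …, y_{n-1}]` inherited from
the `D_n` grading: the variables are indexed by `Fin (n+2)` with `0 ↦ x₂`,
`1 ↦ x_{n-1}` and `2+m ↦ y_m`; the coordinate `i : Fin n` corresponds to the basis
vector `e_i` of `ℤⁿ`.  Thus `w(x₂) = e₂`, `w(x_{n-1}) = e_{n-1}`,
`w(y₀) = -2e₀+e₁+e₂+e₃`, `w(y₁) = e₀-2e₁`, `w(y₂) = e₀-2e₂`, `w(y₃) = e₀-2e₃+e₄`,
`w(y_m) = e_{m-1}-2e_m+e_{m+1}` for `4 ≤ m ≤ n-2` and `w(y_{n-1}) = e_{n-2}-2e_{n-1}`. -/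
def wQ (n : ℕ) (v : Fin (n + 2)) (i : Fin n) : ℤ :=
  if (v : ℕ) = 0 then (if (i : ℕ) = 2 then 1 else 0)
  else if (v : ℕ) = 1 then (if (i : ℕ) = n - 1 then 1 else 0)
  else if (v : ℕ) = 2 then
    (if (i : ℕ) = 0 then -2 else if (i : ℕ) = 1 ∨ (i : ℕ) = 2 ∨ (i : ℕ) = 3 then 1 else 0)
  else if (v : ℕ) = 3 then (if (i : ℕ) = 0 then 1 else if (i : ℕ) = 1 then -2 else 0)
  else if (v : ℕ) = 4 then (if (i : ℕ) = 0 then 1 else if (i : ℕ) = 2 then -2 else 0)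
  else if (v : ℕ) = 5 then
    (if (i : ℕ) = 0 then 1 else 0) + (if (i : ℕ) = 3 then -2 else 0)
      + (if (i : ℕ) = 4 then 1 else 0)
  else
    (if (i : ℕ) = (v : ℕ) - 3 then 1 else 0) + (if (i : ℕ) = (v : ℕ) - 2 then -2 else 0)
      + (if (i : ℕ) = (v : ℕ) - 1 then 1 else 0)

/-- The exponent vector of the monomial
`M_a = x₂ · x_{n-1}^{n(k-1)/2 + 1 + 2a} · y₀^{k+2a} · y₁^a · y₂^{(k+1)/2 + a} ·
∏_{j=3}^{n-1} y_j^{j(k-1)/2 + 1 + 2a}` (variable indices as in `wQ`). -/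
def expM (n k a : ℕ) (v : Fin (n + 2)) : ℕ :=
  if (v : ℕ) = 0 then 1
  else if (v : ℕ) = 1 then n * ((k - 1) / 2) + 1 + 2 * a
  else if (v : ℕ) = 2 then k + 2 * a
  else if (v : ℕ) = 3 then a
  else if (v : ℕ) = 4 then (k + 1) / 2 + a
  else ((v : ℕ) - 2) * ((k - 1) / 2) + 1 + 2 * a

/-- `wQ` as a function of bare natural numbers. -/
def Wfun (n m j : ℕ) : ℤ :=
  if m = 0 then (if j = 2 then 1 else 0)
  else if m = 1 then (if j = n - 1 then 1 else 0)
  else if m = 2 then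
    (if j = 0 then -2 else if j = 1 ∨ j = 2 ∨ j = 3 then 1 else 0)
  else if m = 3 then (if j = 0 then 1 else if j = 1 then -2 else 0)
  else if m = 4 then (if j = 0 then 1 else if j = 2 then -2 else 0)
  else if m = 5 then
    (if j = 0 then 1 else 0) + (if j = 3 then -2 else 0) + (if j = 4 then 1 else 0)
  else
    (if j = m - 3 then 1 else 0) + (if j = m - 2 then -2 else 0) + (if j = m - 1 then 1 else 0)

lemma wQ_eq_W (n : ℕ) (v : Fin (n+2)) (i : Fin n) : wQ n v i = Wfun n v i := rfl

/-- the exponent vector extended by zero to all of `ℕ`. -/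
def DN (n : ℕ) (d : Fin (n+2) →₀ ℕ) (m : ℕ) : ℕ :=
  if h : m < n + 2 then d ⟨m, h⟩ else 0

lemma DN_eq (n : ℕ) (d : Fin (n+2) →₀ ℕ) (m : ℕ) (h : m < n+2) : DN n d m = d ⟨m, h⟩ :=
  dif_pos h

lemma DN_zero (n : ℕ) (d : Fin (n+2) →₀ ℕ) (m : ℕ) (h : n+2 ≤ m) : DN n d m = 0 :=
  dif_neg (by omega)

lemma sum_ind (lo hi c j : ℕ) (hc : c ≤ lo) (g : ℕ → ℤ) :
    ∑ m ∈ Finset.Ico lo hi, (if j = m - c then g m else 0)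
      = if lo ≤ j + c ∧ j + c < hi then g (j + c) else 0 := by
  rw [Finset.sum_congr rfl (fun m hm => ?_), Finset.sum_ite_eq' (Finset.Ico lo hi) (j+c) g]
  · simp [Finset.mem_Ico]
  · simp only [Finset.mem_Ico] at hm
    exact if_congr (by omega) rfl rfl

lemma sum_formula (n : ℕ) (hn : 4 ≤ n) (d : Fin (n+2) →₀ ℕ) (i : Fin n) :
    ∑ v, (d v : ℤ) * wQ n v i =
      (DN n d 0 : ℤ) * (if (i:ℕ) = 2 then 1 else 0)
    + (DN n d 1 : ℤ) * (if (i:ℕ) = n - 1 then 1 else 0)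
    + (DN n d 2 : ℤ) * (if (i:ℕ) = 0 then -2 else if (i:ℕ) = 1 ∨ (i:ℕ) = 2 ∨ (i:ℕ) = 3 then 1 else 0)
    + (DN n d 3 : ℤ) * (if (i:ℕ) = 0 then 1 else if (i:ℕ) = 1 then -2 else 0)
    + (DN n d 4 : ℤ) * (if (i:ℕ) = 0 then 1 else if (i:ℕ) = 2 then -2 else 0)
    + (DN n d 5 : ℤ) * ((if (i:ℕ) = 0 then 1 else 0) + (if (i:ℕ) = 3 then -2 else 0)
        + (if (i:ℕ) = 4 then 1 else 0))
    + ((if 6 ≤ (i:ℕ) + 3 ∧ (i:ℕ) + 3 < n + 2 then (DN n d ((i:ℕ)+3) : ℤ) else 0)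
      + (if 6 ≤ (i:ℕ) + 2 ∧ (i:ℕ) + 2 < n + 2 then (-2) * (DN n d ((i:ℕ)+2) : ℤ) else 0)
      + (if 6 ≤ (i:ℕ) + 1 ∧ (i:ℕ) + 1 < n + 2 then (DN n d ((i:ℕ)+1) : ℤ) else 0)) := by
  have h1 : ∑ v, (d v : ℤ) * wQ n v i
      = ∑ m ∈ Finset.range (n+2), (DN n d m : ℤ) * Wfun n m i := by
    rw [← Fin.sum_univ_eq_sum_range (fun m => (DN n d m : ℤ) * Wfun n m (i:ℕ)) (n+2)]
    refine Finset.sum_congr rfl fun v _ => ?_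
    rw [wQ_eq_W, DN_eq n d v.1 v.isLt]
  rw [h1, ← Finset.sum_range_add_sum_Ico _ (show 6 ≤ n + 2 by omega)]
  have h2 : ∑ m ∈ Finset.range 6, (DN n d m : ℤ) * Wfun n m i
      = (DN n d 0 : ℤ) * (if (i:ℕ) = 2 then 1 else 0)
      + (DN n d 1 : ℤ) * (if (i:ℕ) = n - 1 then 1 else 0)
      + (DN n d 2 : ℤ) * (if (i:ℕ) = 0 then -2 else if (i:ℕ) = 1 ∨ (i:ℕ) = 2 ∨ (i:ℕ) = 3 then 1 else 0)
      + (DN n d 3 : ℤ) * (if (i:ℕ) = 0 then 1 else if (i:ℕ) = 1 then -2 else 0)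
      + (DN n d 4 : ℤ) * (if (i:ℕ) = 0 then 1 else if (i:ℕ) = 2 then -2 else 0)
      + (DN n d 5 : ℤ) * ((if (i:ℕ) = 0 then 1 else 0) + (if (i:ℕ) = 3 then -2 else 0)
          + (if (i:ℕ) = 4 then 1 else 0)) := by
    simp [Finset.sum_range_succ, Wfun]
  have h3 : ∑ m ∈ Finset.Ico 6 (n+2), (DN n d m : ℤ) * Wfun n m i
      = (if 6 ≤ (i:ℕ) + 3 ∧ (i:ℕ) + 3 < n + 2 then (DN n d ((i:ℕ)+3) : ℤ) else 0)
      + (if 6 ≤ (i:ℕ) + 2 ∧ (i:ℕ) + 2 < n + 2 then (-2) * (DN n d ((i:ℕ)+2) : ℤ) else 0)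
      + (if 6 ≤ (i:ℕ) + 1 ∧ (i:ℕ) + 1 < n + 2 then (DN n d ((i:ℕ)+1) : ℤ) else 0) := by
    have hcong : ∀ m ∈ Finset.Ico 6 (n+2), (DN n d m : ℤ) * Wfun n m i
        = (if (i:ℕ) = m - 3 then (DN n d m : ℤ) else 0)
        + (if (i:ℕ) = m - 2 then (-2) * (DN n d m : ℤ) else 0)
        + (if (i:ℕ) = m - 1 then (DN n d m : ℤ) else 0) := by
      intro m hm
      simp only [Finset.mem_Ico] at hm
      unfold Wfun
      rw [if_neg (by omega), if_neg (by omega), if_neg (by omega), if_neg (by omega),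
        if_neg (by omega), if_neg (by omega)]
      split_ifs <;> ring
    rw [Finset.sum_congr rfl hcong, Finset.sum_add_distrib, Finset.sum_add_distrib,
      sum_ind 6 (n+2) 3 i (by omega), sum_ind 6 (n+2) 2 i (by omega),
      sum_ind 6 (n+2) 1 i (by omega)]
  rw [h2, h3]


lemma sum_ge4 (n : ℕ) (hn : 4 ≤ n) (d : Fin (n+2) →₀ ℕ) (i : Fin n) (hi : 4 ≤ (i:ℕ)) :
    ∑ v, (d v : ℤ) * wQ n v i
      = (if (i:ℕ) = n-1 then (DN n d 1 : ℤ) else 0) + DN n d ((i:ℕ)+1)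
        - 2 * (DN n d ((i:ℕ)+2) : ℤ) + DN n d ((i:ℕ)+3) := by
  obtain ⟨j, hjlt⟩ := i
  rw [sum_formula n hn d]
  simp only [Fin.val_mk] at *
  rcases eq_or_ne j 4 with h4 | h4
  · subst h4
    rcases eq_or_ne (4:ℕ) (n-1) with he | he
    · have hn5 : n = 5 := by omega
      subst hn5
      have hz : DN 5 d 7 = 0 := DN_zero 5 d 7 (by omega)
      norm_num [hz]
      ring
    · simp only [if_neg he]
      norm_num [show (6:ℕ) < n+2 from by omega, show (7:ℕ) < n + 2 from by omega]
      ring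
  · have h5 : 5 ≤ j := by omega
    have l1 : ¬ j = 2 := by omega
    have l2 : ¬ j = 0 := by omega
    have l3 : ¬ (j = 1 ∨ j = 2 ∨ j = 3) := by omega
    have l4 : ¬ j = 1 := by omega
    have l5 : ¬ j = 3 := by omega
    have l6 : ¬ j = 4 := by omega
    have t2 : 6 ≤ j+2 ∧ j+2 < n+2 := by omega
    have t3 : 6 ≤ j+1 ∧ j+1 < n+2 := by omega
    rcases eq_or_ne j (n-1) with he | he
    · have hz : DN n d (j+3) = 0 := DN_zero n d _ (by omega)
      have t1 : ¬ (6 ≤ j+3 ∧ j+3 < n+2) := by omega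
      simp only [if_pos he]
      norm_num [l1, l2, l3, l4, l5, l6, t1, t2, t3, hz]
      ring
    · simp only [if_neg he]
      have t1 : 6 ≤ j+3 ∧ j+3 < n+2 := by omega
      norm_num [l1, l2, l3, l4, l5, l6, t1, t2, t3]
      ring

lemma sum_at0 (n : ℕ) (hn : 4 ≤ n) (d : Fin (n+2) →₀ ℕ) (i : Fin n) (hi : (i:ℕ) = 0) :
    ∑ v, (d v : ℤ) * wQ n v i = -2*(DN n d 2 : ℤ) + DN n d 3 + DN n d 4 + DN n d 5 := by
  rw [sum_formula n hn d, hi]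
  norm_num [show ¬((0:ℕ) = n-1) from by omega]
  ring

lemma sum_at1 (n : ℕ) (hn : 4 ≤ n) (d : Fin (n+2) →₀ ℕ) (i : Fin n) (hi : (i:ℕ) = 1) :
    ∑ v, (d v : ℤ) * wQ n v i = (DN n d 2 : ℤ) - 2*(DN n d 3 : ℤ) := by
  rw [sum_formula n hn d, hi]
  norm_num [show ¬((1:ℕ) = n-1) from by omega]
  ring

lemma sum_at2 (n : ℕ) (hn : 4 ≤ n) (d : Fin (n+2) →₀ ℕ) (i : Fin n) (hi : (i:ℕ) = 2) :
    ∑ v, (d v : ℤ) * wQ n v i = (DN n d 0 : ℤ) + DN n d 2 - 2*(DN n d 4 : ℤ) := by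
  rw [sum_formula n hn d, hi]
  norm_num [show ¬((2:ℕ) = n-1) from by omega]
  ring

lemma sum_at3 (n : ℕ) (hn : 4 ≤ n) (d : Fin (n+2) →₀ ℕ) (i : Fin n) (hi : (i:ℕ) = 3) :
    ∑ v, (d v : ℤ) * wQ n v i
      = (if n = 4 then (DN n d 1 : ℤ) else 0) + DN n d 2 - 2*(DN n d 5 : ℤ) + DN n d 6 := by
  rw [sum_formula n hn d, hi]
  rcases eq_or_ne n 4 with h4 | h4
  · subst h4
    have hz : DN 4 d 6 = 0 := DN_zero 4 d 6 (by omega)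
    norm_num [hz]
    ring
  · simp only [if_neg h4, if_neg (show ¬((3:ℕ) = n-1) from by omega)]
    norm_num [show (6:ℕ) < n+2 from by omega]
    ring

lemma equations_iff (n k : ℕ) (hn : 4 ≤ n) (d : Fin (n+2) →₀ ℕ) :
    (∀ i : Fin n, ∑ v, (d v : ℤ) * wQ n v i = if (i : ℕ) = 1 then (k : ℤ) else 0) ↔
    ( -2*(DN n d 2 : ℤ) + DN n d 3 + DN n d 4 + DN n d 5 = 0
    ∧ (DN n d 2 : ℤ) - 2*(DN n d 3 : ℤ) = k
    ∧ (DN n d 0 : ℤ) + DN n d 2 - 2*(DN n d 4 : ℤ) = 0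
    ∧ (if n = 4 then (DN n d 1 : ℤ) else 0) + DN n d 2 - 2*(DN n d 5 : ℤ) + DN n d 6 = 0
    ∧ ∀ j, 4 ≤ j → j ≤ n-1 →
        (if j = n-1 then (DN n d 1 : ℤ) else 0) + DN n d (j+1) - 2*(DN n d (j+2) : ℤ)
          + DN n d (j+3) = 0 ) := by
  constructor
  · intro H
    refine ⟨?_, ?_, ?_, ?_, ?_⟩
    · have h := H ⟨0, by omega⟩
      rw [sum_at0 n hn d _ rfl] at h
      simpa using h
    · have h := H ⟨1, by omega⟩
      rw [sum_at1 n hn d _ rfl] at h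
      simpa using h
    · have h := H ⟨2, by omega⟩
      rw [sum_at2 n hn d _ rfl] at h
      simpa using h
    · have h := H ⟨3, by omega⟩
      rw [sum_at3 n hn d _ rfl] at h
      simpa using h
    · intro j hj4 hjn
      have h := H ⟨j, by omega⟩
      rw [sum_ge4 n hn d ⟨j, by omega⟩ (by simpa using hj4)] at h
      simp only [Fin.val_mk, if_neg (show ¬ j = 1 from by omega)] at h
      exact h
  · rintro ⟨h0, h1, h2, h3, hgen⟩ i
    rcases Nat.lt_or_ge (i : ℕ) 4 with hi | hi
    · interval_cases hiv : (i : ℕ)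
      · rw [sum_at0 n hn d i hiv]; simpa using h0
      · rw [sum_at1 n hn d i hiv]; simpa using h1
      · rw [sum_at2 n hn d i hiv]; simpa using h2
      · rw [sum_at3 n hn d i hiv]; simpa using h3
    · rw [sum_ge4 n hn d i hi, if_neg (show ¬ ((i:ℕ) = 1) from by omega)]
      exact hgen (i:ℕ) hi (by omega)

lemma expM_ge5 (n k a : ℕ) (v : Fin (n+2)) (h5 : 5 ≤ (v:ℕ)) :
    expM n k a v = ((v:ℕ) - 2) * ((k-1)/2) + 1 + 2*a := by
  unfold expM
  rw [if_neg (by omega), if_neg (by omega), if_neg (by omega), if_neg (by omega),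
    if_neg (by omega)]

/-- for `n ≥ 4` and odd `k`, a monomial of
`ℂ[x₂, x_{n-1}, y₀, …, y_{n-1}]` (given by its exponent vector `d`) has weight `k·e₁`
and is not divisible by `y₂x₂²` if and only if it equals `M_a` for some `a ≥ 0`. -/
theorem statement13 (n k : ℕ) (hn : 4 ≤ n) (hk : Odd k) (d : Fin (n + 2) →₀ ℕ) :
    ((∀ i : Fin n, ∑ v, (d v : ℤ) * wQ n v i = if (i : ℕ) = 1 then (k : ℤ) else 0) ∧
      ¬(2 ≤ d ⟨0, by omega⟩ ∧ 1 ≤ d ⟨4, by omega⟩)) ↔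
    ∃ a : ℕ, ∀ v : Fin (n + 2), d v = expM n k a v := by
  obtain ⟨t, ht⟩ := hk
  constructor
  · rintro ⟨hw, hnd⟩
    rw [equations_iff n k hn d] at hw
    obtain ⟨h0, h1, h2, h3, hgen⟩ := hw
    have hnd2 : ¬(2 ≤ DN n d 0 ∧ 1 ≤ DN n d 4) := by
      rw [DN_eq n d 0 (by omega), DN_eq n d 4 (by omega)]
      exact hnd
    have hC0 : (DN n d 2 : ℤ) = 2*t + 1 + 2*(DN n d 3 : ℤ) := by omega
    have hA : DN n d 0 = 1 := by omega
    have hC2 : (DN n d 4 : ℤ) = t + 1 + (DN n d 3 : ℤ) := by omega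
    have hC3 : (DN n d 5 : ℤ) = 3*t + 1 + 2*(DN n d 3 : ℤ) := by omega
    have hval : ∀ m, 3 ≤ m → m ≤ n-1 →
        (DN n d (m+2) : ℤ) = (m:ℤ) * t + 1 + 2*(DN n d 3 : ℤ) := by
      intro m
      induction m using Nat.strong_induction_on with
      | _ m IH =>
        intro h3m hmn
        rcases eq_or_ne m 3 with rfl | hm3
        · norm_num
          omega
        · rcases eq_or_ne m 4 with rfl | hm4
          · rw [if_neg (show ¬ n = 4 from by omega)] at h3
            norm_num
            omega
          · -- m ≥ 5
            have hg := hgen (m-1) (by omega) (by omega)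
            rw [if_neg (show ¬ m-1 = n-1 from by omega),
              show m-1+1 = m from by omega, show m-1+2 = m+1 from by omega,
              show m-1+3 = m+2 from by omega] at hg
            have IH1 := IH (m-1) (by omega) (by omega) (by omega)
            have IH2 := IH (m-2) (by omega) (by omega) (by omega)
            rw [show m-1+2 = m+1 from by omega] at IH1
            rw [show m-2+2 = m from by omega] at IH2
            rw [show ((m-1:ℕ):ℤ) = (m:ℤ)-1 from by omega] at IH1
            rw [show ((m-2:ℕ):ℤ) = (m:ℤ)-2 from by omega] at IH2
            linear_combination hg + 2*IH1 - IH2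
    have hB : (DN n d 1 : ℤ) = (n:ℤ)*t + 1 + 2*(DN n d 3 : ℤ) := by
      rcases eq_or_ne n 4 with h4 | h4
      · rw [if_pos h4] at h3
        have hz : DN n d 6 = 0 := DN_zero n d 6 (by omega)
        subst h4
        omega
      · have hg := hgen (n-1) (by omega) (by omega)
        rw [if_pos rfl, show n-1+1 = n from by omega, show n-1+2 = n+1 from by omega,
          show n-1+3 = n+2 from by omega] at hg
        have hzZ : (DN n d (n+2) : ℤ) = 0 := by
          rw [DN_zero n d (n+2) (by omega)]
          norm_num
        have hv1 := hval (n-2) (by omega) (by omega)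
        have hv2 := hval (n-1) (by omega) (by omega)
        rw [show n-2+2 = n from by omega,
          show ((n-2:ℕ):ℤ) = (n:ℤ)-2 from by omega] at hv1
        rw [show n-1+2 = n+1 from by omega,
          show ((n-1:ℕ):ℤ) = (n:ℤ)-1 from by omega] at hv2
        linear_combination hg - hzZ + 2*hv2 - hv1
    refine ⟨DN n d 3, fun v => ?_⟩
    obtain ⟨m, hm⟩ := v
    rw [show d ⟨m, hm⟩ = DN n d m from (DN_eq n d m hm).symm]
    unfold expM
    simp only [Fin.val_mk]
    rcases eq_or_ne m 0 with rfl | hm0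
    · norm_num
      exact hA
    rcases eq_or_ne m 1 with rfl | hm1
    · norm_num
      rw [show (k-1)/2 = t from by omega]
      have h' : ((DN n d 1 : ℕ) : ℤ) = ((n*t + 1 + 2*DN n d 3 : ℕ) : ℤ) := by
        push_cast
        linarith [hB]
      exact_mod_cast h'
    rcases eq_or_ne m 2 with rfl | hm2
    · norm_num
      omega
    rcases eq_or_ne m 3 with rfl | hm3
    · norm_num
    rcases eq_or_ne m 4 with rfl | hm4
    · norm_num
      omega
    · rw [if_neg hm0, if_neg hm1, if_neg hm2, if_neg hm3, if_neg hm4,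
        show (k-1)/2 = t from by omega]
      have hv := hval (m-2) (by omega) (by omega)
      rw [show m-2+2 = m from by omega] at hv
      have h' : ((DN n d m : ℕ) : ℤ) = (((m-2)*t + 1 + 2*DN n d 3 : ℕ) : ℤ) := by
        push_cast
        linarith [hv]
      exact_mod_cast h'
  · rintro ⟨a, hd⟩
    have hDv : ∀ m (h : m < n+2), DN n d m = expM n k a ⟨m, h⟩ :=
      fun m h => (DN_eq n d m h).trans (hd ⟨m, h⟩)
    have e0 : DN n d 0 = 1 := by simpa [expM] using hDv 0 (by omega)
    have e1 : DN n d 1 = n*t + 1 + 2*a := by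
      have := hDv 1 (by omega)
      simpa [expM, show (k-1)/2 = t from by omega] using this
    have e2 : DN n d 2 = k + 2*a := by simpa [expM] using hDv 2 (by omega)
    have e3 : DN n d 3 = a := by simpa [expM] using hDv 3 (by omega)
    have e4 : DN n d 4 = t + 1 + a := by
      have := hDv 4 (by omega)
      simp [expM] at this
      omega
    have egen : ∀ m, 5 ≤ m → m ≤ n+1 → DN n d m = (m-2)*((k-1)/2) + 1 + 2*a := by
      intro m h5 hn1
      have := hDv m (by omega)
      rw [expM_ge5 n k a ⟨m, by omega⟩ (by simpa using h5)] at this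
      simpa using this
    have egenZ : ∀ m, 5 ≤ m → m ≤ n+1 →
        (DN n d m : ℤ) = (m:ℤ)*t - 2*t + 1 + 2*(a:ℤ) := by
      intro m h5 hn1
      have h' := egen m h5 hn1
      rw [show (k-1)/2 = t from by omega] at h'
      have : ((DN n d m : ℕ) : ℤ) = (((m-2)*t + 1 + 2*a : ℕ) : ℤ) := by exact_mod_cast h'
      push_cast at this
      rw [show ((m-2:ℕ):ℤ) = (m:ℤ)-2 from by omega] at this
      linarith [this]
    have e5 : DN n d 5 = 3*((k-1)/2) + 1 + 2*a := by simpa using egen 5 (by omega) (by omega)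
    constructor
    · rw [equations_iff n k hn d]
      refine ⟨by omega, by omega, by omega, ?_, ?_⟩
      · rcases eq_or_ne n 4 with h4 | h4
        · rw [if_pos h4]
          have hz : DN n d 6 = 0 := DN_zero n d 6 (by omega)
          subst h4
          omega
        · rw [if_neg h4]
          have h6 : DN n d 6 = 4*((k-1)/2) + 1 + 2*a := by simpa using egen 6 (by omega) (by omega)
          omega
      · intro j hj4 hjn
        have G1 := egenZ (j+1) (by omega) (by omega)
        have G2 := egenZ (j+2) (by omega) (by omega)
        rcases eq_or_ne j (n-1) with he | he
        · rw [if_pos he]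
          have hzZ : (DN n d (j+3) : ℤ) = 0 := by
            rw [DN_zero n d (j+3) (by omega)]; norm_num
          have e1Z : (DN n d 1 : ℤ) = (n:ℤ)*t + 1 + 2*(a:ℤ) := by exact_mod_cast e1
          have hjZ : (j:ℤ) = (n:ℤ) - 1 := by omega
          push_cast at G1 G2 e1Z hzZ ⊢
          linear_combination e1Z + G1 - 2*G2 + hzZ - (t:ℤ)*hjZ
        · rw [if_neg he]
          have G3 := egenZ (j+3) (by omega) (by omega)
          push_cast at G1 G2 G3 ⊢
          linear_combination G1 - 2*G2 + G3
    · rintro ⟨ha, hb⟩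
      rw [hd] at ha hb
      simp [expM] at ha
end

section
/- Work in the polynomial ring S = ℂ[x₁, x₃, x₆, y₀, y₁, …, y₆] graded by ℤ⁷ with the E₇ weights. The invariant ring Sᵀ (the ℂ-subalgebra of polynomials each of whose monomials has weight 0) equals the ℂ-subalgebra generated by the four monomials Z₁ = x₃ y₀⁴ y₁² y₂³ y₃² y₄³ y₅² y₆, Z₂ = x₁² y₀¹² y₁⁷ y₂⁸ y₃⁴ y₄⁹ y₅⁶ y₆³, Z₃ = x₁ x₆ y₀⁹ y₁⁵ y₂⁶ y₃³ y₄⁷ y₅⁵ y₆³, Z₄ = x₆² y₀⁶ y₁³ y₂⁴ y₃² y₄⁵ y₅⁴ y₆³; and the kernel of the ℂ-algebra homomorphism ℂ[Z₁, Z₂, Z₃, Z₄] → S sending the variables Z_i to these monomials is the principal ideal generated by Z₃² − Z₂Z₄. Consequently Sᵀ ≅ ℂ[Z₁, Z₂, Z₃, Z₄]/(Z₃² − Z₂Z₄). -/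
open MvPolynomial

/-- The subalgebra of an `Fin n`-multigraded polynomial ring consisting of the polynomials
all of whose monomials have weight zero (the ring of invariants of the torus action
with weights `w`). -/
noncomputable def invariants {m n : ℕ} (w : Fin m → Fin n → ℤ) :
    Subalgebra ℂ (MvPolynomial (Fin m) ℂ) where
  carrier := {p | ∀ d ∈ p.support, ∀ i : Fin n, ∑ v, (d v : ℤ) * w v i = 0}
  zero_mem' := by
    intro d hd i
    simp at hd
  one_mem' := by
    intro d hd i
    have hd' : d = 0 := by
      by_contra h
      have := MvPolynomial.mem_support_iff.mp hd
      rw [show (1 : MvPolynomial (Fin m) ℂ) = C 1 from (map_one C).symm,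
        MvPolynomial.coeff_C, if_neg (Ne.symm h)] at this
      exact this rfl
    subst hd'
    simp
  add_mem' := by
    intro p q hp hq d hd i
    rcases Finset.mem_union.mp (MvPolynomial.support_add hd) with h | h
    · exact hp d h i
    · exact hq d h i
  mul_mem' := by
    intro p q hp hq d hd i
    obtain ⟨a, ha, b, hb, rfl⟩ := Finset.mem_add.mp (MvPolynomial.support_mul p q hd)
    have key : ∀ v : Fin m, (((a + b) v : ℤ)) * w v i
        = (a v : ℤ) * w v i + (b v : ℤ) * w v i := by
      intro v
      rw [Finsupp.add_apply]
      push_cast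
      ring
    rw [Finset.sum_congr rfl fun v _ => key v, Finset.sum_add_distrib,
      hp a ha i, hq b hb i, add_zero]
  algebraMap_mem' := by
    intro r d hd i
    have hd' : d = 0 := by
      by_contra h
      have := MvPolynomial.mem_support_iff.mp hd
      rw [MvPolynomial.algebraMap_eq, MvPolynomial.coeff_C, if_neg (Ne.symm h)] at this
      exact this rfl
    subst hd'
    simp

open MvPolynomial

/-- Weights of the torus action for the `E₇` singularity: the variables of
`S = ℂ[x₁, x₃, x₆, y₀, …, y₆]` are indexed by `Fin 10` with `0 ↦ x₁`, `1 ↦ x₃`,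
`2 ↦ x₆`, `3+m ↦ y_m`; the rows below are `w(x₁) = e₁`, `w(x₃) = e₃`, `w(x₆) = e₆`,
`w(y₀) = -2e₀+e₁+e₂+e₄`, `w(y₁) = e₀-2e₁`, `w(y₂) = e₀-2e₂+e₃`, `w(y₃) = e₂-2e₃`,
`w(y₄) = e₀-2e₄+e₅`, `w(y₅) = e₄-2e₅+e₆`, `w(y₆) = e₅-2e₆`. -/
def wE7 : Fin 10 → Fin 7 → ℤ :=
  ![![0, 1, 0, 0, 0, 0, 0],
    ![0, 0, 0, 1, 0, 0, 0],
    ![0, 0, 0, 0, 0, 0, 1],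
    ![-2, 1, 1, 0, 1, 0, 0],
    ![1, -2, 0, 0, 0, 0, 0],
    ![1, 0, -2, 1, 0, 0, 0],
    ![0, 0, 1, -2, 0, 0, 0],
    ![1, 0, 0, 0, -2, 1, 0],
    ![0, 0, 0, 0, 1, -2, 1],
    ![0, 0, 0, 0, 0, 1, -2]]

/-- `Z₁ = x₃ y₀⁴ y₁² y₂³ y₃² y₄³ y₅² y₆`. -/
noncomputable def E7Z₁ : MvPolynomial (Fin 10) ℂ :=
  X 1 * X 3 ^ 4 * X 4 ^ 2 * X 5 ^ 3 * X 6 ^ 2 * X 7 ^ 3 * X 8 ^ 2 * X 9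

/-- `Z₂ = x₁² y₀¹² y₁⁷ y₂⁸ y₃⁴ y₄⁹ y₅⁶ y₆³`. -/
noncomputable def E7Z₂ : MvPolynomial (Fin 10) ℂ :=
  X 0 ^ 2 * X 3 ^ 12 * X 4 ^ 7 * X 5 ^ 8 * X 6 ^ 4 * X 7 ^ 9 * X 8 ^ 6 * X 9 ^ 3

/-- `Z₃ = x₁ x₆ y₀⁹ y₁⁵ y₂⁶ y₃³ y₄⁷ y₅⁵ y₆³`. -/
noncomputable def E7Z₃ : MvPolynomial (Fin 10) ℂ :=
  X 0 * X 2 * X 3 ^ 9 * X 4 ^ 5 * X 5 ^ 6 * X 6 ^ 3 * X 7 ^ 7 * X 8 ^ 5 * X 9 ^ 3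

/-- `Z₄ = x₆² y₀⁶ y₁³ y₂⁴ y₃² y₄⁵ y₅⁴ y₆³`. -/
noncomputable def E7Z₄ : MvPolynomial (Fin 10) ℂ :=
  X 2 ^ 2 * X 3 ^ 6 * X 4 ^ 3 * X 5 ^ 4 * X 6 ^ 2 * X 7 ^ 5 * X 8 ^ 4 * X 9 ^ 3


section Auxiliary

theorem sum9' {β : Type*} [AddCommMonoid β] (f : Fin 9 → β) :
    ∑ v, f v = f 0 + f 1 + f 2 + f 3 + f 4 + f 5 + f 6 + f 7 + f 8 := by
  rw [Fin.sum_univ_castSucc, Fin.sum_univ_eight]; rfl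

theorem sum10' {β : Type*} [AddCommMonoid β] (f : Fin 10 → β) :
    ∑ v, f v = f 0 + f 1 + f 2 + f 3 + f 4 + f 5 + f 6 + f 7 + f 8 + f 9 := by
  rw [Fin.sum_univ_castSucc, sum9']; rfl

theorem mem_invariants {m n : ℕ} (w : Fin m → Fin n → ℤ) (p : MvPolynomial (Fin m) ℂ) :
    p ∈ invariants w ↔ ∀ d ∈ p.support, ∀ i : Fin n, ∑ v, (d v : ℤ) * w v i = 0 := Iff.rfl

theorem invariant_exponent {d : Fin 10 →₀ ℕ}
    (h : ∀ i : Fin 7, ∑ v, ((d v : ℤ)) * wE7 v i = 0) :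
    ∃ k1 k2 k3 k4 : ℕ, d 0 = 2*k2 + k3 ∧ d 1 = k1 ∧ d 2 = k3 + 2*k4 ∧
      d 3 = 4*k1 + 12*k2 + 9*k3 + 6*k4 ∧ d 4 = 2*k1 + 7*k2 + 5*k3 + 3*k4 ∧
      d 5 = 3*k1 + 8*k2 + 6*k3 + 4*k4 ∧ d 6 = 2*k1 + 4*k2 + 3*k3 + 2*k4 ∧
      d 7 = 3*k1 + 9*k2 + 7*k3 + 5*k4 ∧ d 8 = 2*k1 + 6*k2 + 5*k3 + 4*k4 ∧
      d 9 = k1 + 3*k2 + 3*k3 + 3*k4 := by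
  have e0 := h 0; have e1 := h 1; have e2 := h 2; have e3 := h 3
  have e4 := h 4; have e5 := h 5; have e6 := h 6
  rw [sum10'] at e0 e1 e2 e3 e4 e5 e6
  simp only [show wE7 0 0 = 0 from rfl, show wE7 0 1 = 1 from rfl, show wE7 0 2 = 0 from rfl, show wE7 0 3 = 0 from rfl, show wE7 0 4 = 0 from rfl, show wE7 0 5 = 0 from rfl, show wE7 0 6 = 0 from rfl, show wE7 1 0 = 0 from rfl, show wE7 1 1 = 0 from rfl, show wE7 1 2 = 0 from rfl, show wE7 1 3 = 1 from rfl, show wE7 1 4 = 0 from rfl, show wE7 1 5 = 0 from rfl, show wE7 1 6 = 0 from rfl, show wE7 2 0 = 0 from rfl, show wE7 2 1 = 0 from rfl, show wE7 2 2 = 0 from rfl, show wE7 2 3 = 0 from rfl, show wE7 2 4 = 0 from rfl, show wE7 2 5 = 0 from rfl, show wE7 2 6 = 1 from rfl, show wE7 3 0 = -2 from rfl, show wE7 3 1 = 1 from rfl, show wE7 3 2 = 1 from rfl, show wE7 3 3 = 0 from rfl, show wE7 3 4 = 1 from rfl, show wE7 3 5 = 0 from rfl, show wE7 3 6 = 0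 from rfl, show wE7 4 0 = 1 from rfl, show wE7 4 1 = -2 from rfl, show wE7 4 2 = 0 from rfl, show wE7 4 3 = 0 from rfl, show wE7 4 4 = 0 from rfl, show wE7 4 5 = 0 from rfl, show wE7 4 6 = 0 from rfl, show wE7 5 0 = 1 from rfl, show wE7 5 1 = 0 from rfl, show wE7 5 2 = -2 from rfl, show wE7 5 3 = 1 from rfl, show wE7 5 4 = 0 from rfl, show wE7 5 5 = 0 from rfl, show wE7 5 6 = 0 from rfl, show wE7 6 0 = 0 from rfl, show wE7 6 1 = 0 from rfl, show wE7 6 2 = 1 from rfl, show wE7 6 3 = -2 from rfl, show wE7 6 4 = 0 from rfl, show wE7 6 5 = 0 from rfl, show wE7 6 6 = 0 from rfl, show wE7 7 0 = 1 from rfl, show wE7 7 1 = 0 from rfl, show wE7 7 2 = 0 from rfl, show wE7 7 3 = 0 from rfl, show wE7 7 4 = -2 from rfl, show wE7 7 5 = 1 from rfl, show wE7 7 6 = 0 from rfl, show wE7 8 0 = 0 from rfl, show wE7 8 1 = 0 from rfl, show wE7 8 2 = 0 from rfl, show wE7 8 3 = 0 from rfl, show wE7 8 4 = 1 from rfl,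 show wE7 8 5 = -2 from rfl, show wE7 8 6 = 1 from rfl, show wE7 9 0 = 0 from rfl, show wE7 9 1 = 0 from rfl, show wE7 9 2 = 0 from rfl, show wE7 9 3 = 0 from rfl, show wE7 9 4 = 0 from rfl, show wE7 9 5 = 1 from rfl, show wE7 9 6 = -2 from rfl, mul_zero, mul_one, add_zero, zero_add] at e0 e1 e2 e3 e4 e5 e6
  exact ⟨d 1, d 0 / 2, d 0 % 2, d 2 / 2, by omega, by omega, by omega, by omega, by omega,
    by omega, by omega, by omega, by omega, by omega⟩

theorem monomial_eq_prod (d : Fin 10 →₀ ℕ) (c : ℂ) (k1 k2 k3 k4 : ℕ)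
    (h0 : d 0 = 2*k2 + k3) (h1 : d 1 = k1) (h2 : d 2 = k3 + 2*k4)
    (h3 : d 3 = 4*k1 + 12*k2 + 9*k3 + 6*k4)
    (h4 : d 4 = 2*k1 + 7*k2 + 5*k3 + 3*k4)
    (h5 : d 5 = 3*k1 + 8*k2 + 6*k3 + 4*k4)
    (h6 : d 6 = 2*k1 + 4*k2 + 3*k3 + 2*k4)
    (h7 : d 7 = 3*k1 + 9*k2 + 7*k3 + 5*k4)
    (h8 : d 8 = 2*k1 + 6*k2 + 5*k3 + 4*k4)
    (h9 : d 9 = k1 + 3*k2 + 3*k3 + 3*k4) :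
    monomial d c = C c * (E7Z₁ ^ k1 * (E7Z₂ ^ k2 * (E7Z₃ ^ k3 * E7Z₄ ^ k4))) := by
  unfold E7Z₁ E7Z₂ E7Z₃ E7Z₄
  simp only [X_pow_eq_monomial, X, monomial_mul, monomial_pow, one_pow, mul_one, one_mul,
    C_mul_monomial]
  rw [monomial_eq_monomial_iff]
  left
  constructor
  · ext v
    fin_cases v <;>
      simp [Finsupp.single_apply, Finsupp.add_apply, Finsupp.smul_apply] <;> omega
  · ring

theorem Zmon1 : E7Z₁ = monomial (Finsupp.single 1 1 + Finsupp.single 3 4 + Finsupp.single 4 2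
    + Finsupp.single 5 3 + Finsupp.single 6 2 + Finsupp.single 7 3 + Finsupp.single 8 2
    + Finsupp.single 9 1) 1 := by
  simp only [E7Z₁, X_pow_eq_monomial, X, monomial_mul, monomial_pow, one_pow, mul_one, one_mul]
  rw [monomial_eq_monomial_iff]; left
  refine ⟨?_, rfl⟩
  ext v; fin_cases v <;> simp [Finsupp.single_apply]

theorem Zmon2 : E7Z₂ = monomial (Finsupp.single 0 2 + Finsupp.single 3 12 + Finsupp.single 4 7
    + Finsupp.single 5 8 + Finsupp.single 6 4 + Finsupp.single 7 9 + Finsupp.single 8 6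
    + Finsupp.single 9 3) 1 := by
  simp only [E7Z₂, X_pow_eq_monomial, X, monomial_mul, monomial_pow, one_pow, mul_one, one_mul]
  rw [monomial_eq_monomial_iff]; left
  refine ⟨?_, rfl⟩
  ext v; fin_cases v <;> simp [Finsupp.single_apply]

theorem Zmon3 : E7Z₃ = monomial (Finsupp.single 0 1 + Finsupp.single 2 1 + Finsupp.single 3 9
    + Finsupp.single 4 5 + Finsupp.single 5 6 + Finsupp.single 6 3 + Finsupp.single 7 7
    + Finsupp.single 8 5 + Finsupp.single 9 3) 1 := by
  simp only [E7Z₃, X_pow_eq_monomial, X, monomial_mul, monomial_pow, one_pow, mul_one, one_mul]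
  rw [monomial_eq_monomial_iff]; left
  refine ⟨?_, rfl⟩
  ext v; fin_cases v <;> simp [Finsupp.single_apply]

theorem Zmon4 : E7Z₄ = monomial (Finsupp.single 2 2 + Finsupp.single 3 6 + Finsupp.single 4 3
    + Finsupp.single 5 4 + Finsupp.single 6 2 + Finsupp.single 7 5 + Finsupp.single 8 4
    + Finsupp.single 9 3) 1 := by
  simp only [E7Z₄, X_pow_eq_monomial, X, monomial_mul, monomial_pow, one_pow, mul_one, one_mul]
  rw [monomial_eq_monomial_iff]; left
  refine ⟨?_, rfl⟩
  ext v; fin_cases v <;> simp [Finsupp.single_apply]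

theorem Z1_mem : E7Z₁ ∈ invariants wE7 := by
  rw [mem_invariants, Zmon1]
  intro d hd i
  rw [support_monomial, if_neg one_ne_zero, Finset.mem_singleton] at hd
  subst hd
  rw [sum10']
  simp only [Finsupp.coe_add, Pi.add_apply, Finsupp.single_apply]
  norm_num
  revert i
  decide

theorem Z2_mem : E7Z₂ ∈ invariants wE7 := by
  rw [mem_invariants, Zmon2]
  intro d hd i
  rw [support_monomial, if_neg one_ne_zero, Finset.mem_singleton] at hd
  subst hd
  rw [sum10']
  simp only [Finsupp.coe_add, Pi.add_apply, Finsupp.single_apply]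
  norm_num
  revert i
  decide

theorem Z3_mem : E7Z₃ ∈ invariants wE7 := by
  rw [mem_invariants, Zmon3]
  intro d hd i
  rw [support_monomial, if_neg one_ne_zero, Finset.mem_singleton] at hd
  subst hd
  rw [sum10']
  simp only [Finsupp.coe_add, Pi.add_apply, Finsupp.single_apply]
  norm_num
  revert i
  decide

theorem Z4_mem : E7Z₄ ∈ invariants wE7 := by
  rw [mem_invariants, Zmon4]
  intro d hd i
  rw [support_monomial, if_neg one_ne_zero, Finset.mem_singleton] at hd
  subst hd
  rw [sum10']
  simp only [Finsupp.coe_add, Pi.add_apply, Finsupp.single_apply]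
  norm_num
  revert i
  decide

theorem part1 : invariants wE7 = Algebra.adjoin ℂ {E7Z₁, E7Z₂, E7Z₃, E7Z₄} := by
  apply le_antisymm
  · intro p hp
    rw [← support_sum_monomial_coeff p]
    apply Subalgebra.sum_mem
    intro d hd
    obtain ⟨k1, k2, k3, k4, h0, h1, h2, h3, h4, h5, h6, h7, h8, h9⟩ :=
      invariant_exponent (fun i => (mem_invariants wE7 p).mp hp d hd i)
    rw [monomial_eq_prod d _ k1 k2 k3 k4 h0 h1 h2 h3 h4 h5 h6 h7 h8 h9]
    have hC : C (coeff d p) ∈ Algebra.adjoin ℂ {E7Z₁, E7Z₂, E7Z₃, E7Z₄} := by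
      have := Subalgebra.algebraMap_mem (Algebra.adjoin ℂ {E7Z₁, E7Z₂, E7Z₃, E7Z₄}) (coeff d p)
      rwa [MvPolynomial.algebraMap_eq] at this
    refine Subalgebra.mul_mem _ hC ?_
    refine Subalgebra.mul_mem _ (Subalgebra.pow_mem _ (Algebra.subset_adjoin (by simp)) _) ?_
    refine Subalgebra.mul_mem _ (Subalgebra.pow_mem _ (Algebra.subset_adjoin (by simp)) _) ?_
    exact Subalgebra.mul_mem _ (Subalgebra.pow_mem _ (Algebra.subset_adjoin (by simp)) _)
      (Subalgebra.pow_mem _ (Algebra.subset_adjoin (by simp)) _)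
  · rw [Algebra.adjoin_le_iff]
    intro x hx
    simp only [Set.mem_insert_iff, Set.mem_singleton_iff] at hx
    rcases hx with rfl | rfl | rfl | rfl
    exacts [Z1_mem, Z2_mem, Z3_mem, Z4_mem]

end Auxiliary

section Part2

/-- The comparison map `ℂ[u,v,w]` targets. -/
noncomputable def gE7 : Fin 4 → MvPolynomial (Fin 3) ℂ :=
  ![X 0, X 1 ^ 2, X 1 * X 2, X 2 ^ 2]

/-- Exponent map induced by `gE7` on monomials. -/
noncomputable def sigE (e : Fin 4 →₀ ℕ) : Fin 3 →₀ ℕ :=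
  Finsupp.single 0 (e 0) + Finsupp.single 1 (2 * e 1 + e 2) + Finsupp.single 2 (e 2 + 2 * e 3)

/-- Reduction of an exponent modulo the relation. -/
noncomputable def redE (e : Fin 4 →₀ ℕ) : Fin 4 →₀ ℕ :=
  Finsupp.single 0 (e 0) + Finsupp.single 1 (e 1 + e 2 / 2) + Finsupp.single 2 (e 2 % 2) +
    Finsupp.single 3 (e 3 + e 2 / 2)

theorem mono4 (e : Fin 4 →₀ ℕ) (c : ℂ) :
    monomial e c = C c * X 0 ^ e 0 * X 1 ^ e 1 * X 2 ^ e 2 * X 3 ^ e 3 := by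
  simp only [X_pow_eq_monomial, monomial_mul, C_mul_monomial, mul_one]
  rw [monomial_eq_monomial_iff]; left
  refine ⟨?_, rfl⟩
  ext v; fin_cases v <;> simp [Finsupp.single_apply]

theorem mono3 (e : Fin 3 →₀ ℕ) (c : ℂ) :
    monomial e c = C c * X 0 ^ e 0 * X 1 ^ e 1 * X 2 ^ e 2 := by
  simp only [X_pow_eq_monomial, monomial_mul, C_mul_monomial, mul_one]
  rw [monomial_eq_monomial_iff]; left
  refine ⟨?_, rfl⟩
  ext v; fin_cases v <;> simp [Finsupp.single_apply]

theorem sigE_apply0 (e : Fin 4 →₀ ℕ) : sigE e 0 = e 0 := by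
  simp [sigE, Finsupp.single_apply]
theorem sigE_apply1 (e : Fin 4 →₀ ℕ) : sigE e 1 = 2 * e 1 + e 2 := by
  simp [sigE, Finsupp.single_apply]
theorem sigE_apply2 (e : Fin 4 →₀ ℕ) : sigE e 2 = e 2 + 2 * e 3 := by
  simp [sigE, Finsupp.single_apply]

theorem redE_apply0 (e : Fin 4 →₀ ℕ) : redE e 0 = e 0 := by
  simp [redE, Finsupp.single_apply]
theorem redE_apply1 (e : Fin 4 →₀ ℕ) : redE e 1 = e 1 + e 2 / 2 := by
  simp [redE, Finsupp.single_apply]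
theorem redE_apply2 (e : Fin 4 →₀ ℕ) : redE e 2 = e 2 % 2 := by
  simp [redE, Finsupp.single_apply]
theorem redE_apply3 (e : Fin 4 →₀ ℕ) : redE e 3 = e 3 + e 2 / 2 := by
  simp [redE, Finsupp.single_apply]

theorem aeval_g_monomial (e : Fin 4 →₀ ℕ) (c : ℂ) :
    aeval gE7 (monomial e c) = monomial (sigE e) c := by
  rw [mono4, mono3]
  simp only [map_mul, map_pow, aeval_X, aeval_C,
    show gE7 0 = X 0 from rfl, show gE7 1 = X 1 ^ 2 from rfl,
    show gE7 2 = X 1 * X 2 from rfl, show gE7 3 = X 2 ^ 2 from rfl,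
    sigE_apply0, sigE_apply1, sigE_apply2, MvPolynomial.algebraMap_eq]
  ring

theorem sigE_inj {a b : Fin 4 →₀ ℕ} (ha : a 2 ≤ 1) (hb : b 2 ≤ 1) (h : sigE a = sigE b) :
    a = b := by
  have h0 := congrArg (fun s => s 0) h
  have h1 := congrArg (fun s => s 1) h
  have h2 := congrArg (fun s => s 2) h
  simp only [sigE_apply0, sigE_apply1, sigE_apply2] at h0 h1 h2
  have e0 : a 0 = b 0 := h0
  have e1 : a 1 = b 1 := by omega
  have e2 : a 2 = b 2 := by omega
  have e3 : a 3 = b 3 := by omega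
  ext v; fin_cases v
  exacts [e0, e1, e2, e3]

theorem aeval_g_inj_red (f : MvPolynomial (Fin 4) ℂ) (hred : ∀ e ∈ f.support, e 2 ≤ 1)
    (h : aeval gE7 f = 0) : f = 0 := by
  have hrepr : aeval gE7 f = ∑ e ∈ f.support, monomial (sigE e) (coeff e f) := by
    conv_lhs => rw [← support_sum_monomial_coeff f]
    rw [map_sum]
    exact Finset.sum_congr rfl fun e _ => aeval_g_monomial e _
  by_contra hne
  obtain ⟨e, he⟩ := Finset.nonempty_iff_ne_empty.mpr (fun h0 => hne (MvPolynomial.support_eq_empty.mp h0))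
  have hc : coeff (sigE e) (aeval gE7 f) = coeff e f := by
    rw [hrepr, coeff_sum]
    refine (Finset.sum_eq_single_of_mem e he fun b hb hbe => ?_).trans ?_
    · rw [coeff_monomial, if_neg (fun hsig => hbe (sigE_inj (hred b hb) (hred e he) hsig))]
    · rw [coeff_monomial, if_pos rfl]
  rw [h, coeff_zero] at hc
  exact (MvPolynomial.mem_support_iff.mp he) hc.symm

theorem sub_red_mem (e : Fin 4 →₀ ℕ) (c : ℂ) :
    monomial e c - monomial (redE e) c
      ∈ (Ideal.span {X 2 ^ 2 - X 1 * X 3} : Ideal (MvPolynomial (Fin 4) ℂ)) := by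
  rw [Ideal.mem_span_singleton]
  rw [mono4 e c, mono4 (redE e) c, redE_apply0, redE_apply1, redE_apply2, redE_apply3]
  set k := e 2 / 2 with hk
  set r := e 2 % 2 with hr
  have h2 : e 2 = 2 * k + r := by omega
  rw [h2]
  have key : C c * X 0 ^ e 0 * X 1 ^ e 1 * X 2 ^ (2 * k + r) * X 3 ^ e 3 -
      C c * X 0 ^ e 0 * X 1 ^ (e 1 + k) * X 2 ^ r * X 3 ^ (e 3 + k) =
      (C c * X 0 ^ e 0 * X 1 ^ e 1 * X 2 ^ r * X 3 ^ e 3) *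
        (((X 2 : MvPolynomial (Fin 4) ℂ) ^ 2) ^ k - (X 1 * X 3) ^ k) := by
    rw [pow_add, pow_mul, pow_add, pow_add, mul_pow]
    ring
  rw [key]
  exact Dvd.dvd.mul_left (sub_dvd_pow_sub_pow _ _ k) _

/-- Reduced form modulo the relation ideal. -/
noncomputable def RedP (f : MvPolynomial (Fin 4) ℂ) : MvPolynomial (Fin 4) ℂ :=
  ∑ e ∈ f.support, monomial (redE e) (coeff e f)

theorem sub_RedP_mem (f : MvPolynomial (Fin 4) ℂ) :
    f - RedP f ∈ (Ideal.span {X 2 ^ 2 - X 1 * X 3} : Ideal (MvPolynomial (Fin 4) ℂ)) := by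
  have hrepr : f - RedP f
      = ∑ e ∈ f.support, (monomial e (coeff e f) - monomial (redE e) (coeff e f)) := by
    rw [Finset.sum_sub_distrib, support_sum_monomial_coeff]
    rfl
  rw [hrepr]
  exact Ideal.sum_mem _ fun e _ => sub_red_mem e _

theorem RedP_support (f : MvPolynomial (Fin 4) ℂ) : ∀ e ∈ (RedP f).support, e 2 ≤ 1 := by
  intro e he
  have h := MvPolynomial.support_sum he
  obtain ⟨a, _, hea⟩ := Finset.mem_biUnion.mp h
  rw [support_monomial] at hea
  split_ifs at hea
  · simp at hea
  · rw [Finset.mem_singleton] at hea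
    subst hea
    rw [redE_apply2]
    omega

end Part2

section Part3

noncomputable def pvec : Fin 10 → MvPolynomial (Fin 3) ℂ :=
  ![X 1, X 0, X 2, 1, 1, 1, 1, 1, 1, 1]

theorem pi_comp (f : MvPolynomial (Fin 4) ℂ) :
    aeval pvec (aeval ![E7Z₁, E7Z₂, E7Z₃, E7Z₄] f) = aeval gE7 f := by
  rw [comp_aeval_apply]
  suffices h : (fun i => aeval pvec (![E7Z₁, E7Z₂, E7Z₃, E7Z₄] i)) = gE7 by rw [h]
  funext i
  fin_cases i
  · show aeval pvec E7Z₁ = gE7 0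
    simp [E7Z₁, gE7, map_mul, map_pow, aeval_X,
      show pvec 1 = X 0 from rfl, show pvec 3 = 1 from rfl, show pvec 4 = 1 from rfl,
      show pvec 5 = 1 from rfl, show pvec 6 = 1 from rfl, show pvec 7 = 1 from rfl,
      show pvec 8 = 1 from rfl, show pvec 9 = 1 from rfl]
  · show aeval pvec E7Z₂ = gE7 1
    simp [E7Z₂, gE7, map_mul, map_pow, aeval_X,
      show pvec 0 = X 1 from rfl, show pvec 3 = 1 from rfl, show pvec 4 = 1 from rfl,
      show pvec 5 = 1 from rfl, show pvec 6 = 1 from rfl, show pvec 7 = 1 from rfl,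
      show pvec 8 = 1 from rfl, show pvec 9 = 1 from rfl]
  · show aeval pvec E7Z₃ = gE7 2
    simp [E7Z₃, gE7, map_mul, map_pow, aeval_X,
      show pvec 0 = X 1 from rfl, show pvec 2 = X 2 from rfl, show pvec 3 = 1 from rfl,
      show pvec 4 = 1 from rfl,
      show pvec 5 = 1 from rfl, show pvec 6 = 1 from rfl, show pvec 7 = 1 from rfl,
      show pvec 8 = 1 from rfl, show pvec 9 = 1 from rfl]
  · show aeval pvec E7Z₄ = gE7 3
    simp [E7Z₄, gE7, map_mul, map_pow, aeval_X,
      show pvec 2 = X 2 from rfl, show pvec 3 = 1 from rfl, show pvec 4 = 1 from rfl,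
      show pvec 5 = 1 from rfl, show pvec 6 = 1 from rfl, show pvec 7 = 1 from rfl,
      show pvec 8 = 1 from rfl, show pvec 9 = 1 from rfl]

theorem kerE7 :
    RingHom.ker
        (MvPolynomial.aeval ![E7Z₁, E7Z₂, E7Z₃, E7Z₄] :
          MvPolynomial (Fin 4) ℂ →ₐ[ℂ] MvPolynomial (Fin 10) ℂ)
      = (Ideal.span {X 2 ^ 2 - X 1 * X 3} : Ideal (MvPolynomial (Fin 4) ℂ)) := by
  apply le_antisymm
  · intro f hf
    rw [RingHom.mem_ker] at hf
    have hg : aeval gE7 f = 0 := by rw [← pi_comp f, hf, map_zero]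
    have hmem : f - RedP f ∈ (Ideal.span {X 2 ^ 2 - X 1 * X 3} :
        Ideal (MvPolynomial (Fin 4) ℂ)) := sub_RedP_mem f
    have hg2 : aeval gE7 (f - RedP f) = 0 := by
      obtain ⟨q, hq⟩ := Ideal.mem_span_singleton.mp hmem
      rw [hq, map_mul]
      have hz : aeval gE7 ((X 2 : MvPolynomial (Fin 4) ℂ) ^ 2 - X 1 * X 3)
          = (X 1 * X 2 : MvPolynomial (Fin 3) ℂ) ^ 2 - X 1 ^ 2 * X 2 ^ 2 := by
        simp [map_sub, map_pow, map_mul, aeval_X,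
          show gE7 1 = X 1 ^ 2 from rfl, show gE7 2 = X 1 * X 2 from rfl,
          show gE7 3 = X 2 ^ 2 from rfl]
      rw [hz, show (X 1 * X 2 : MvPolynomial (Fin 3) ℂ) ^ 2 - X 1 ^ 2 * X 2 ^ 2 = 0 by ring,
        zero_mul]
    have hRed0 : aeval gE7 (RedP f) = 0 := by
      rw [map_sub, hg, zero_sub, neg_eq_zero] at hg2
      exact hg2
    have hR : RedP f = 0 := aeval_g_inj_red _ (RedP_support f) hRed0
    have hf2 : f = f - RedP f := by rw [hR, sub_zero]
    rw [hf2]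
    exact hmem
  · rw [Ideal.span_le]
    intro x hx
    rw [Set.mem_singleton_iff] at hx
    subst hx
    rw [SetLike.mem_coe, RingHom.mem_ker]
    have hv : (aeval ![E7Z₁, E7Z₂, E7Z₃, E7Z₄] :
          MvPolynomial (Fin 4) ℂ →ₐ[ℂ] MvPolynomial (Fin 10) ℂ) (X 2 ^ 2 - X 1 * X 3)
        = E7Z₃ ^ 2 - E7Z₂ * E7Z₄ := by
      simp [map_sub, map_pow, map_mul, aeval_X,
        show (![E7Z₁, E7Z₂, E7Z₃, E7Z₄] : Fin 4 → MvPolynomial (Fin 10) ℂ) 1 = E7Z₂ from rfl,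
        show (![E7Z₁, E7Z₂, E7Z₃, E7Z₄] : Fin 4 → MvPolynomial (Fin 10) ℂ) 2 = E7Z₃ from rfl,
        show (![E7Z₁, E7Z₂, E7Z₃, E7Z₄] : Fin 4 → MvPolynomial (Fin 10) ℂ) 3 = E7Z₄ from rfl]
    rw [hv]
    unfold E7Z₂ E7Z₃ E7Z₄
    ring

end Part3

/-- the ring of invariants of the `E₇` torus action on `S` is generated,
as a `ℂ`-subalgebra, by `Z₁, Z₂, Z₃, Z₄`; the kernel of the `ℂ`-algebra map
`ℂ[Z₁,Z₂,Z₃,Z₄] → S` sending the variables to these monomials is the principal ideal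
`(Z₃² - Z₂Z₄)`; consequently the invariant ring is isomorphic to
`ℂ[Z₁,Z₂,Z₃,Z₄]/(Z₃² - Z₂Z₄)`. -/
theorem statement15 :
    invariants wE7 = Algebra.adjoin ℂ {E7Z₁, E7Z₂, E7Z₃, E7Z₄} ∧
    RingHom.ker
        (MvPolynomial.aeval ![E7Z₁, E7Z₂, E7Z₃, E7Z₄] :
          MvPolynomial (Fin 4) ℂ →ₐ[ℂ] MvPolynomial (Fin 10) ℂ)
      = (Ideal.span {X 2 ^ 2 - X 1 * X 3} : Ideal (MvPolynomial (Fin 4) ℂ)) ∧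
    Nonempty
      ((MvPolynomial (Fin 4) ℂ ⧸
          (Ideal.span {X 2 ^ 2 - X 1 * X 3} : Ideal (MvPolynomial (Fin 4) ℂ)))
        ≃ₐ[ℂ] invariants wE7) := by
  refine ⟨part1, kerE7, ?_⟩
  have hrangeset : Set.range (![E7Z₁, E7Z₂, E7Z₃, E7Z₄] : Fin 4 → MvPolynomial (Fin 10) ℂ)
      = {E7Z₁, E7Z₂, E7Z₃, E7Z₄} := by
    ext x
    constructor
    · rintro ⟨i, rfl⟩
      fin_cases i <;> simp
    · intro hx
      simp only [Set.mem_insert_iff, Set.mem_singleton_iff] at hx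
      rcases hx with rfl | rfl | rfl | rfl
      exacts [⟨0, rfl⟩, ⟨1, rfl⟩, ⟨2, rfl⟩, ⟨3, rfl⟩]
  have hrange : (MvPolynomial.aeval ![E7Z₁, E7Z₂, E7Z₃, E7Z₄] :
      MvPolynomial (Fin 4) ℂ →ₐ[ℂ] MvPolynomial (Fin 10) ℂ).range = invariants wE7 := by
    rw [← Algebra.adjoin_range_eq_range_aeval, hrangeset, part1]
  set φ := (MvPolynomial.aeval ![E7Z₁, E7Z₂, E7Z₃, E7Z₄] :
      MvPolynomial (Fin 4) ℂ →ₐ[ℂ] MvPolynomial (Fin 10) ℂ) with hφ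
  have hmem : ∀ x, φ x ∈ invariants wE7 := by
    intro x
    rw [← hrange]
    exact ⟨x, rfl⟩
  let φ' := φ.codRestrict (invariants wE7) hmem
  have hco : ∀ x, (φ' x : MvPolynomial (Fin 10) ℂ) = φ x := fun x => rfl
  have hsurj : Function.Surjective φ' := by
    rintro ⟨y, hy⟩
    rw [← hrange] at hy
    obtain ⟨x, hx⟩ := hy
    exact ⟨x, Subtype.ext hx⟩
  have hker : RingHom.ker φ' = (Ideal.span {X 2 ^ 2 - X 1 * X 3} :
      Ideal (MvPolynomial (Fin 4) ℂ)) := by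
    rw [← kerE7]
    ext x
    rw [RingHom.mem_ker, RingHom.mem_ker]
    constructor
    · intro h
      have := congrArg (Subtype.val) h
      rw [hco x] at this
      exact this
    · intro h
      exact Subtype.ext (by rw [hco x, hφ, h]; rfl)
  exact ⟨(Ideal.quotientEquivAlgOfEq ℂ hker.symm).trans
    (Ideal.quotientKerAlgEquivOfSurjective hsurj)⟩
end

section
/- There is an isomorphism of ℂ-algebras ℂ[x, y, z]/(x⁴ + y³ + z²) ≅ ℂ[Z₁, Z₂, Z₃, Z₄]/(Z₂³ − Z₃Z₄, Z₁² + Z₃ + Z₄). In other words, the E₆ singularity {x⁴ + y³ + z² = 0} ⊂ ℂ³ is isomorphic to the intersection of the hypersurfaces {Z₂³ − Z₃Z₄ = 0} and {Z₁² + Z₃ + Z₄ = 0} in ℂ⁴. -/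
open MvPolynomial Complex

/-- the `E₆` singularity `{x⁴ + y³ + z² = 0} ⊂ ℂ³` is isomorphic to the
intersection `{Z₂³ - Z₃Z₄ = 0} ∩ {Z₁² + Z₃ + Z₄ = 0} ⊂ ℂ⁴`: their coordinate rings are
isomorphic as `ℂ`-algebras.  (Here `x, y, z` are `X 0, X 1, X 2` and `Z₁, Z₂, Z₃, Z₄`
are `X 0, X 1, X 2, X 3`.) -/
theorem statement17 :
    Nonempty
      ((MvPolynomial (Fin 3) ℂ ⧸
          (Ideal.span {X 0 ^ 4 + X 1 ^ 3 + X 2 ^ 2} : Ideal (MvPolynomial (Fin 3) ℂ)))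
        ≃ₐ[ℂ]
      (MvPolynomial (Fin 4) ℂ ⧸
          (Ideal.span {X 1 ^ 3 - X 2 * X 3, X 0 ^ 2 + X 2 + X 3} :
            Ideal (MvPolynomial (Fin 4) ℂ)))) := by
  obtain ⟨b, hb⟩ := IsAlgClosed.exists_pow_nat_eq (-4 : ℂ) (n := 3) (by norm_num)
  set I3 : Ideal (MvPolynomial (Fin 3) ℂ) := Ideal.span {X 0 ^ 4 + X 1 ^ 3 + X 2 ^ 2} with hI3
  set I4 : Ideal (MvPolynomial (Fin 4) ℂ) :=
    Ideal.span {X 1 ^ 3 - X 2 * X 3, X 0 ^ 2 + X 2 + X 3} with hI4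
  set p : Fin 3 → MvPolynomial (Fin 4) ℂ :=
    ![X 0, C b * X 1, C I * X 0 ^ 2 + 2 * C I * X 2] with hp
  set q : Fin 4 → MvPolynomial (Fin 3) ℂ :=
    ![X 0, -(C b ^ 2 * C (1/2 : ℂ) ^ 2) * X 1,
      -(C I * C (1/2 : ℂ)) * X 2 - C (1/2 : ℂ) * X 0 ^ 2,
      C I * C (1/2 : ℂ) * X 2 - C (1/2 : ℂ) * X 0 ^ 2] with hq
  have HB4 : (C b : MvPolynomial (Fin 4) ℂ) ^ 3 = -4 := by
    rw [← map_pow, hb]; simp [map_ofNat]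
  have HA4 : (C I : MvPolynomial (Fin 4) ℂ) ^ 2 = -1 := by
    rw [← map_pow, Complex.I_sq]; simp [map_ofNat]
  have HH4 : (2 : MvPolynomial (Fin 4) ℂ) * C (1/2 : ℂ) = 1 := by
    rw [(map_ofNat C 2).symm, ← C_mul]
    norm_num
  have HB3 : (C b : MvPolynomial (Fin 3) ℂ) ^ 3 = -4 := by
    rw [← map_pow, hb]; simp [map_ofNat]
  have HA3 : (C I : MvPolynomial (Fin 3) ℂ) ^ 2 = -1 := by
    rw [← map_pow, Complex.I_sq]; simp [map_ofNat]
  have HH3 : (2 : MvPolynomial (Fin 3) ℂ) * C (1/2 : ℂ) = 1 := by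
    rw [(map_ofNat C 2).symm, ← C_mul]
    norm_num
  -- forward hom kills I3
  have hFker : ∀ a ∈ I3, ((Ideal.Quotient.mkₐ ℂ I4).comp (aeval p)) a = 0 := by
    intro a ha
    rw [hI3, Ideal.mem_span_singleton] at ha
    obtain ⟨c, rfl⟩ := ha
    rw [map_mul]
    convert zero_mul _
    rw [AlgHom.comp_apply, Ideal.Quotient.mkₐ_eq_mk, Ideal.Quotient.eq_zero_iff_mem, hI4]
    rw [Ideal.mem_span_pair]
    refine ⟨-4, -4 * X 2, ?_⟩
    simp only [hp, map_add, map_pow, map_mul, aeval_X, Matrix.cons_val_zero,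
      Matrix.cons_val_one, Matrix.head_cons, Matrix.cons_val_two, Matrix.tail_cons, aeval_C,
      algebraMap_eq, map_ofNat]
    linear_combination (-(X 1 ^ 3) : MvPolynomial (Fin 4) ℂ) * HB4 -
      (X 0 ^ 4 + 4 * X 0 ^ 2 * X 2 + 4 * X 2 ^ 2 : MvPolynomial (Fin 4) ℂ) * HA4
  -- backward hom kills I4
  have hg1 : ((Ideal.Quotient.mkₐ ℂ I3).comp (aeval q)) (X 1 ^ 3 - X 2 * X 3) = 0 := by
    rw [AlgHom.comp_apply, Ideal.Quotient.mkₐ_eq_mk, Ideal.Quotient.eq_zero_iff_mem, hI3,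
      Ideal.mem_span_singleton]
    refine ⟨-(C (1/2 : ℂ) ^ 2), ?_⟩
    simp only [hq, map_sub, map_pow, map_mul, aeval_X, Matrix.cons_val_zero,
      Matrix.cons_val_one, Matrix.head_cons, Matrix.cons_val_two, Matrix.tail_cons,
      Matrix.cons_val_three, aeval_C, algebraMap_eq, map_neg]
    linear_combination (X 1 ^ 3 * C (1/2 : ℂ) ^ 6 * (4 - C b ^ 3) : MvPolynomial (Fin 3) ℂ) * HB3 +
      (X 2 ^ 2 * C (1/2 : ℂ) ^ 2 : MvPolynomial (Fin 3) ℂ) * HA3 -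
      (X 1 ^ 3 * C (1/2 : ℂ) ^ 2 * (2 * C (1/2 : ℂ) + 1) * (1 + 4 * C (1/2 : ℂ) ^ 2) :
        MvPolynomial (Fin 3) ℂ) * HH3
  have hg2 : ((Ideal.Quotient.mkₐ ℂ I3).comp (aeval q)) (X 0 ^ 2 + X 2 + X 3) = 0 := by
    rw [AlgHom.comp_apply, Ideal.Quotient.mkₐ_eq_mk]
    convert map_zero (Ideal.Quotient.mk I3)
    simp only [hq, map_add, map_pow, map_mul, aeval_X, Matrix.cons_val_zero,
      Matrix.cons_val_one, Matrix.head_cons, Matrix.cons_val_two, Matrix.tail_cons,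
      Matrix.cons_val_three, aeval_C, algebraMap_eq, map_neg]
    linear_combination (-(X 0 ^ 2) : MvPolynomial (Fin 3) ℂ) * HH3
  have hGker : ∀ a ∈ I4, ((Ideal.Quotient.mkₐ ℂ I3).comp (aeval q)) a = 0 := by
    intro a ha
    rw [hI4, Ideal.mem_span_pair] at ha
    obtain ⟨u, v, rfl⟩ := ha
    rw [map_add, map_mul, map_mul, hg1, hg2, mul_zero, mul_zero, add_zero]
  set F := Ideal.Quotient.liftₐ I3 ((Ideal.Quotient.mkₐ ℂ I4).comp (aeval p)) hFker with hF
  set G := Ideal.Quotient.liftₐ I4 ((Ideal.Quotient.mkₐ ℂ I3).comp (aeval q)) hGker with hG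
  have hFmk : ∀ a, F (Ideal.Quotient.mk I3 a) = Ideal.Quotient.mk I4 (aeval p a) := by
    intro a
    rw [hF]
    rfl
  have hGmk : ∀ a, G (Ideal.Quotient.mk I4 a) = Ideal.Quotient.mk I3 (aeval q a) := by
    intro a
    rw [hG]
    rfl
  refine ⟨AlgEquiv.ofAlgHom F G ?_ ?_⟩
  · -- F ∘ G = id on Fin 4 side
    apply Ideal.Quotient.algHom_ext
    apply MvPolynomial.algHom_ext
    intro i
    rw [AlgHom.comp_apply, AlgHom.comp_apply, AlgHom.comp_apply, Ideal.Quotient.mkₐ_eq_mk,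
      hGmk, hFmk, aeval_X]
    simp only [AlgHom.coe_id, id_eq]
    fin_cases i
    · simp [hq, hp]
    · show (Ideal.Quotient.mk I4) ((aeval p) (q 1)) = (Ideal.Quotient.mk I4) (X 1)
      refine congrArg _ ?_
      simp only [hq, hp, map_sub, map_add, map_mul, map_pow, map_neg, aeval_X, aeval_C,
        algebraMap_eq, map_ofNat, Matrix.cons_val_zero, Matrix.cons_val_one, Matrix.head_cons,
        Matrix.cons_val_two, Matrix.tail_cons, Matrix.cons_val_three]
      linear_combination (-(C (1/2 : ℂ) ^ 2 * X 1) : MvPolynomial (Fin 4) ℂ) * HB4 +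
        ((2 * C (1/2 : ℂ) + 1) * X 1 : MvPolynomial (Fin 4) ℂ) * HH4
    · show (Ideal.Quotient.mk I4) ((aeval p) (q 2)) = (Ideal.Quotient.mk I4) (X 2)
      refine congrArg _ ?_
      simp only [hq, hp, map_sub, map_add, map_mul, map_pow, map_neg, aeval_X, aeval_C,
        algebraMap_eq, map_ofNat, Matrix.cons_val_zero, Matrix.cons_val_one, Matrix.head_cons,
        Matrix.cons_val_two, Matrix.tail_cons, Matrix.cons_val_three]
      linear_combination ((C (1/2 : ℂ) * X 0 ^ 2 + 2 * C (1/2 : ℂ) * X 2 : MvPolynomial (Fin 4) ℂ))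
          * (-HA4) + ((X 2 : MvPolynomial (Fin 4) ℂ)) * HH4
    · show (Ideal.Quotient.mk I4) ((aeval p) (q 3)) = (Ideal.Quotient.mk I4) (X 3)
      rw [Ideal.Quotient.eq, hI4, Ideal.mem_span_pair]
      refine ⟨0, -1, ?_⟩
      simp only [hq, hp, map_sub, map_add, map_mul, map_pow, map_neg, aeval_X, aeval_C,
        algebraMap_eq, map_ofNat, Matrix.cons_val_zero, Matrix.cons_val_one, Matrix.head_cons,
        Matrix.cons_val_two, Matrix.tail_cons, Matrix.cons_val_three]
      linear_combination (-(C (1/2 : ℂ) * X 0 ^ 2) - 2 * C (1/2 : ℂ) * X 2 :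
          MvPolynomial (Fin 4) ℂ) * HA4 + ((X 0 ^ 2 + X 2 : MvPolynomial (Fin 4) ℂ)) * HH4
  · -- G ∘ F = id on Fin 3 side
    apply Ideal.Quotient.algHom_ext
    apply MvPolynomial.algHom_ext
    intro i
    rw [AlgHom.comp_apply, AlgHom.comp_apply, AlgHom.comp_apply, Ideal.Quotient.mkₐ_eq_mk,
      hFmk, hGmk, aeval_X]
    simp only [AlgHom.coe_id, id_eq]
    fin_cases i
    · simp [hq, hp]
    · show (Ideal.Quotient.mk I3) ((aeval q) (p 1)) = (Ideal.Quotient.mk I3) (X 1)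
      refine congrArg _ ?_
      simp only [hq, hp, map_sub, map_add, map_mul, map_pow, map_neg, aeval_X, aeval_C,
        algebraMap_eq, map_ofNat, Matrix.cons_val_zero, Matrix.cons_val_one, Matrix.head_cons,
        Matrix.cons_val_two, Matrix.tail_cons, Matrix.cons_val_three]
      linear_combination (-(C (1/2 : ℂ) ^ 2 * X 1) : MvPolynomial (Fin 3) ℂ) * HB3 +
        ((2 * C (1/2 : ℂ) + 1) * X 1 : MvPolynomial (Fin 3) ℂ) * HH3
    · show (Ideal.Quotient.mk I3) ((aeval q) (p 2)) = (Ideal.Quotient.mk I3) (X 2)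
      refine congrArg _ ?_
      simp only [hq, hp, map_sub, map_add, map_mul, map_pow, map_neg, aeval_X, aeval_C,
        algebraMap_eq, map_ofNat, Matrix.cons_val_zero, Matrix.cons_val_one, Matrix.head_cons,
        Matrix.cons_val_two, Matrix.tail_cons, Matrix.cons_val_three]
      linear_combination ((2 * C (1/2 : ℂ) * X 2 : MvPolynomial (Fin 3) ℂ)) * (-HA3) +
        ((X 2 - C I * X 0 ^ 2 : MvPolynomial (Fin 3) ℂ)) * HH3
end

section
/- There is an isomorphism of ℂ-algebras ℂ[x, y, z]/(x³y + y³ + z²) ≅ ℂ[Z₁, Z₂, Z₃, Z₄]/(Z₃² − Z₂Z₄, Z₁³ + Z₂ + Z₄²). In other words, the E₇ singularity {x³y + y³ + z² = 0} ⊂ ℂ³ is isomorphic to the intersection of the hypersurfaces {Z₃² − Z₂Z₄ = 0} and {Z₁³ + Z₂ + Z₄² = 0} in ℂ⁴. -/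
open MvPolynomial

noncomputable section Aux18

def IA18 : Ideal (MvPolynomial (Fin 3) ℂ) :=
  Ideal.span {X 0 ^ 3 * X 1 + X 1 ^ 3 + X 2 ^ 2}

def JB18 : Ideal (MvPolynomial (Fin 4) ℂ) :=
  Ideal.span {X 2 ^ 2 - X 1 * X 3, X 0 ^ 3 + X 1 + X 3 ^ 2}

def v18 : Fin 3 → MvPolynomial (Fin 4) ℂ := ![X 0, X 3, X 2]

def w18 : Fin 4 → MvPolynomial (Fin 3) ℂ := ![X 0, -(X 0 ^ 3 + X 1 ^ 2), X 2, X 1]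

def φ18 : MvPolynomial (Fin 3) ℂ →ₐ[ℂ] MvPolynomial (Fin 4) ℂ ⧸ JB18 :=
  (Ideal.Quotient.mkₐ ℂ JB18).comp (aeval v18)

def ψ18 : MvPolynomial (Fin 4) ℂ →ₐ[ℂ] MvPolynomial (Fin 3) ℂ ⧸ IA18 :=
  (Ideal.Quotient.mkₐ ℂ IA18).comp (aeval w18)

lemma hφ18 : ∀ a ∈ IA18, φ18 a = 0 := by
  intro a ha
  have h : IA18 ≤ RingHom.ker φ18.toRingHom := by
    rw [IA18, Ideal.span_le, Set.singleton_subset_iff]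
    have hv : aeval v18 ((X 0 : MvPolynomial (Fin 3) ℂ) ^ 3 * X 1 + X 1 ^ 3 + X 2 ^ 2)
        = X 3 * (X 0 ^ 3 + X 1 + X 3 ^ 2) + 1 * (X 2 ^ 2 - X 1 * X 3) := by
      simp only [map_add, map_mul, map_pow, aeval_X, v18, Matrix.cons_val_zero,
        Matrix.cons_val_one, Matrix.head_cons, Matrix.cons_val_two, Matrix.tail_cons]
      ring
    change Ideal.Quotient.mk JB18 (aeval v18 _) = 0
    simp only [SetLike.mem_coe, RingHom.mem_ker, AlgHom.toRingHom_eq_coe, RingHom.coe_coe,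
      φ18, AlgHom.comp_apply, hv, Ideal.Quotient.mkₐ_eq_mk, Ideal.Quotient.eq_zero_iff_mem,
      JB18, Ideal.mem_span_pair]
    exact Ideal.Quotient.eq_zero_iff_mem.mpr (Ideal.mem_span_pair.mpr ⟨1, X 3, by ring⟩)
  exact h ha

lemma hψ18 : ∀ a ∈ JB18, ψ18 a = 0 := by
  intro a ha
  have h : JB18 ≤ RingHom.ker ψ18.toRingHom := by
    rw [JB18, Ideal.span_le, Set.insert_subset_iff, Set.singleton_subset_iff]
    constructor
    · have hw : aeval w18 ((X 2 : MvPolynomial (Fin 4) ℂ) ^ 2 - X 1 * X 3)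
          = X 0 ^ 3 * X 1 + X 1 ^ 3 + X 2 ^ 2 := by
        simp only [map_sub, map_mul, map_pow, map_neg, map_add, aeval_X, w18,
          Matrix.cons_val_zero, Matrix.cons_val_one, Matrix.head_cons, Matrix.cons_val_two,
          Matrix.tail_cons, Matrix.cons_val_three, Matrix.head_fin_const]
        ring
      change Ideal.Quotient.mk IA18 (aeval w18 _) = 0
      simp only [SetLike.mem_coe, RingHom.mem_ker, AlgHom.toRingHom_eq_coe, RingHom.coe_coe,
        ψ18, AlgHom.comp_apply, hw, Ideal.Quotient.mkₐ_eq_mk, Ideal.Quotient.eq_zero_iff_mem,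
        IA18]
      exact Ideal.Quotient.eq_zero_iff_mem.mpr (Ideal.subset_span rfl)
    · have hw : aeval w18 ((X 0 : MvPolynomial (Fin 4) ℂ) ^ 3 + X 1 + X 3 ^ 2)
          = (0 : MvPolynomial (Fin 3) ℂ) := by
        simp only [map_add, map_pow, map_neg, aeval_X, w18,
          Matrix.cons_val_zero, Matrix.cons_val_one, Matrix.head_cons, Matrix.cons_val_two,
          Matrix.tail_cons, Matrix.cons_val_three, Matrix.head_fin_const]
        ring
      simp only [SetLike.mem_coe, RingHom.mem_ker, AlgHom.toRingHom_eq_coe, RingHom.coe_coe,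
        ψ18, AlgHom.comp_apply, hw, map_zero]
  exact h ha

def f18 : (MvPolynomial (Fin 3) ℂ ⧸ IA18) →ₐ[ℂ] MvPolynomial (Fin 4) ℂ ⧸ JB18 :=
  Ideal.Quotient.liftₐ IA18 φ18 hφ18

def g18 : (MvPolynomial (Fin 4) ℂ ⧸ JB18) →ₐ[ℂ] MvPolynomial (Fin 3) ℂ ⧸ IA18 :=
  Ideal.Quotient.liftₐ JB18 ψ18 hψ18

lemma f18_mk (p : MvPolynomial (Fin 3) ℂ) : f18 (Ideal.Quotient.mk IA18 p) = φ18 p :=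
  DFunLike.congr_fun (Ideal.Quotient.liftₐ_comp IA18 φ18 hφ18) p

lemma g18_mk (p : MvPolynomial (Fin 4) ℂ) : g18 (Ideal.Quotient.mk JB18 p) = ψ18 p :=
  DFunLike.congr_fun (Ideal.Quotient.liftₐ_comp JB18 ψ18 hψ18) p

lemma fg18 : f18.comp g18 = AlgHom.id ℂ (MvPolynomial (Fin 4) ℂ ⧸ JB18) := by
  apply Ideal.Quotient.algHom_ext
  apply MvPolynomial.algHom_ext
  intro i
  simp only [AlgHom.comp_apply, Ideal.Quotient.mkₐ_eq_mk, AlgHom.id_apply, g18_mk, ψ18,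
    aeval_X, f18_mk, φ18]
  rw [Ideal.Quotient.mk_eq_mk_iff_sub_mem, JB18, Ideal.mem_span_pair]
  fin_cases i
  · exact ⟨0, 0, by simp [v18, w18]; try ring⟩
  · exact ⟨0, -1, by simp [v18, w18]; try ring⟩
  · exact ⟨0, 0, by simp [v18, w18]; try ring⟩
  · exact ⟨0, 0, by simp [v18, w18]; try ring⟩

lemma gf18 : g18.comp f18 = AlgHom.id ℂ (MvPolynomial (Fin 3) ℂ ⧸ IA18) := by
  apply Ideal.Quotient.algHom_ext
  apply MvPolynomial.algHom_ext
  intro i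
  simp only [AlgHom.comp_apply, Ideal.Quotient.mkₐ_eq_mk, AlgHom.id_apply, f18_mk, φ18,
    aeval_X, g18_mk, ψ18]
  rw [Ideal.Quotient.mk_eq_mk_iff_sub_mem, IA18, Ideal.mem_span_singleton]
  fin_cases i <;> exact ⟨0, by simp [v18, w18]; try ring⟩

end Aux18

/-- the `E₇` singularity `{x³y + y³ + z² = 0} ⊂ ℂ³` is isomorphic to the
intersection `{Z₃² - Z₂Z₄ = 0} ∩ {Z₁³ + Z₂ + Z₄² = 0} ⊂ ℂ⁴`: their coordinate rings
are isomorphic as `ℂ`-algebras.  (Here `x, y, z` are `X 0, X 1, X 2` and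
`Z₁, Z₂, Z₃, Z₄` are `X 0, X 1, X 2, X 3`.) -/
theorem statement18 :
    Nonempty
      ((MvPolynomial (Fin 3) ℂ ⧸
          (Ideal.span {X 0 ^ 3 * X 1 + X 1 ^ 3 + X 2 ^ 2} : Ideal (MvPolynomial (Fin 3) ℂ)))
        ≃ₐ[ℂ]
      (MvPolynomial (Fin 4) ℂ ⧸
          (Ideal.span {X 2 ^ 2 - X 1 * X 3, X 0 ^ 3 + X 1 + X 3 ^ 2} :
            Ideal (MvPolynomial (Fin 4) ℂ)))) :=
  ⟨AlgEquiv.ofAlgHom f18 g18 fg18 gf18⟩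
end
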